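/- arXiv:2005.06905 — 8 statements merged into one kernel-verified Lean document; each statement's English description precedes it below -/
import Mathlib

section
/- For every t with max(0, T − 1/e) < t < T, the squared L²([0,T]²)-norm of the kernel f_t satisfies the exact identity ‖f_t‖² = (1/2)·(1 + log(T)/|log(T−t)| + ((T−t)/T)^{2α−1}/((2α−1)|log(T−t)|) − 1/((2α−1)|log(T−t)|)). -/
open MeasureTheory Real Filter Topology

/-- `λ_t := |log(T−t)|/(2α−1)`. -/
noncomputable def lam (T α t : ℝ) : ℝ := |Real.log (T - t)| / (2 * α - 1)

/-- The kernel `f_t`. -/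
noncomputable def fker (T α t : ℝ) (u v : ℝ) : ℝ :=
  if u ∈ Set.Icc (0:ℝ) t ∧ v ∈ Set.Icc (0:ℝ) t then
    (1 / (2 * Real.sqrt (lam T α t))) * (T - max u v) ^ (α - 1) * (T - min u v) ^ (-α)
  else 0

/-- The kernel `g_t`. -/
noncomputable def gker (T α t : ℝ) (u v : ℝ) : ℝ :=
  if u ∈ Set.Icc (0:ℝ) t ∧ v ∈ Set.Icc (0:ℝ) t then
    (T - u) ^ (-α) * (T - v) ^ (-α) *
      ((T - max u v) ^ (2 * α - 1) - (T - t) ^ (2 * α - 1)) / |Real.log (T - t)|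
  else 0

/-- `⟨p,q⟩ := ∫_{[0,T]²} p(u,v) q(u,v) du dv`. -/
noncomputable def ip (T : ℝ) (p q : ℝ → ℝ → ℝ) : ℝ :=
  ∫ u in Set.Icc (0:ℝ) T, ∫ v in Set.Icc (0:ℝ) T, p u v * q u v

/-- `‖p‖² := ⟨p,p⟩`. -/
noncomputable def normSq (T : ℝ) (p : ℝ → ℝ → ℝ) : ℝ := ip T p p

/-- The contraction `(p ⊗₁ q)(x,y) := ∫₀^T p(x,u) q(y,u) du`. -/
noncomputable def contr (T : ℝ) (p q : ℝ → ℝ → ℝ) : ℝ → ℝ → ℝ :=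
  fun x y => ∫ u in Set.Icc (0:ℝ) T, p x u * q y u

/-- `b_t := (1/λ_t)·∫₀ᵗ ∫₀ˢ (T−s)^{2α−2}(T−u)^{−2α} du ds`. -/
noncomputable def bfun (T α t : ℝ) : ℝ :=
  (1 / lam T α t) *
    ∫ s in (0:ℝ)..t, ∫ u in (0:ℝ)..s, (T - s) ^ (2 * α - 2) * (T - u) ^ (-(2 * α))

/-- `A_{t,1}`. -/
noncomputable def A1 (T α t : ℝ) : ℝ :=
  (1 / (lam T α t) ^ 2) *
    ∫ x4 in (0:ℝ)..t, ∫ x3 in (0:ℝ)..x4, ∫ x2 in (0:ℝ)..x3, ∫ x1 in (0:ℝ)..x2,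
      (T - x4) ^ (2 * α - 2) * (T - x3) ^ (-1 : ℝ) * (T - x2) ^ (-1 : ℝ) *
        (T - x1) ^ (-(2 * α))

/-- `A_{t,2}`. -/
noncomputable def A2 (T α t : ℝ) : ℝ :=
  (1 / (2 * (lam T α t) ^ 2)) *
    ∫ x4 in (0:ℝ)..t, ∫ x2 in (0:ℝ)..x4, ∫ x3 in (0:ℝ)..x2, ∫ x1 in (0:ℝ)..x3,
      (T - x4) ^ (2 * α - 2) * (T - x2) ^ (2 * α - 2) * (T - x3) ^ (-(2 * α)) *
        (T - x1) ^ (-(2 * α))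


/-- squared kernel body -/
noncomputable def Kk (T α : ℝ) (u v : ℝ) : ℝ :=
  (T - max u v) ^ (2 * α - 2) * (T - min u v) ^ (-(2 * α))

lemma int_rpow_sub {a b c p : ℝ} (hab : a ≤ b) (hbc : b < c) (hp : p ≠ -1) :
    ∫ x in a..b, (c - x) ^ p = ((c - a) ^ (p + 1) - (c - b) ^ (p + 1)) / (p + 1) := by
  have h0 : (0:ℝ) ∉ Set.uIcc (c - b) (c - a) :=
    Set.notMem_uIcc_of_lt (by linarith) (by linarith)
  rw [intervalIntegral.integral_comp_sub_left (fun x => x ^ p) c,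
      integral_rpow (Or.inr ⟨hp, h0⟩)]

lemma int_inv_sub {a b c : ℝ} (hab : a ≤ b) (hbc : b < c) :
    ∫ x in a..b, (c - x) ^ (-1 : ℝ) = Real.log (c - a) - Real.log (c - b) := by
  have h0 : (0:ℝ) ∉ Set.uIcc (c - b) (c - a) :=
    Set.notMem_uIcc_of_lt (by linarith) (by linarith)
  simp_rw [Real.rpow_neg_one]
  rw [intervalIntegral.integral_comp_sub_left (fun x => x⁻¹) c, integral_inv h0,
      Real.log_div (by linarith : (0:ℝ) < c - a).ne' (by linarith : (0:ℝ) < c - b).ne']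

lemma final_algebra (β P Q lT la : ℝ) (hβ : β ≠ 0) (hP : P ≠ 0) (hQ : Q ≠ 0) (hla : la ≠ 0) :
    1 / (4 * (-la / β)) * (2 / β * (lT - la) - P⁻¹ / β * ((P - Q) / β) - Q / β * ((P⁻¹ - Q⁻¹) / -β)) =
    1 / 2 * (1 + lT / -la + Q / P / (β * -la) - 1 / (β * -la)) := by
  obtain ⟨m, rfl⟩ : ∃ m, la = -m := ⟨-la, by ring⟩
  have hm : m ≠ 0 := fun h => hla (by rw [h]; ring)
  rw [neg_neg]
  field_simp
  ring
theorem stmt_0 (T α : ℝ) (hT : 0 < T) (hα : 1 / 2 < α)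
    (t : ℝ) (ht1 : max 0 (T - 1 / Real.exp 1) < t) (ht2 : t < T) :
    normSq T (fker T α t) =
      (1 / 2) * (1 + Real.log T / |Real.log (T - t)|
        + ((T - t) / T) ^ (2 * α - 1) / ((2 * α - 1) * |Real.log (T - t)|)
        - 1 / ((2 * α - 1) * |Real.log (T - t)|)) := by
  have ht0 : 0 < t := lt_of_le_of_lt (le_max_left 0 _) ht1
  have hat : 0 < T - t := sub_pos.mpr ht2
  have hloga : Real.log (T - t) < -1 := by
    have h1 : T - 1 / Real.exp 1 < t := lt_of_le_of_lt (le_max_right _ _) ht1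
    have h2 : T - t < 1 / Real.exp 1 := by linarith
    have h3 := Real.log_lt_log hat h2
    rwa [one_div, Real.log_inv, Real.log_exp] at h3
  have habs : |Real.log (T - t)| = -Real.log (T - t) := abs_of_neg (by linarith)
  have hβ : 0 < 2 * α - 1 := by linarith
  have hL : 0 < |Real.log (T - t)| := by rw [habs]; linarith
  have hlam : 0 < lam T α t := div_pos hL hβ
  have hc2 : (1 / (2 * Real.sqrt (lam T α t))) * (1 / (2 * Real.sqrt (lam T α t)))
      = 1 / (4 * lam T α t) := by
    rw [div_mul_div_comm, one_mul,
      show 2 * Real.sqrt (lam T α t) * (2 * Real.sqrt (lam T α t))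
        = 4 * (Real.sqrt (lam T α t) * Real.sqrt (lam T α t)) by ring,
      Real.mul_self_sqrt hlam.le]
  -- Step 1 : rewrite the squared kernel via indicators
  have hstep1 : ∀ u : ℝ, (∫ v in Set.Icc (0:ℝ) T, fker T α t u v * fker T α t u v)
      = Set.indicator (Set.Icc (0:ℝ) t)
          (fun u' => ∫ v in Set.Icc (0:ℝ) t, (1 / (4 * lam T α t)) * Kk T α u' v) u := by
    intro u
    by_cases hu : u ∈ Set.Icc (0:ℝ) t
    · rw [Set.indicator_of_mem hu]
      have hpt : ∀ v, fker T α t u v * fker T α t u v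
          = Set.indicator (Set.Icc (0:ℝ) t)
              (fun v' => (1 / (4 * lam T α t)) * Kk T α u v') v := by
        intro v
        by_cases hv : v ∈ Set.Icc (0:ℝ) t
        · rw [Set.indicator_of_mem hv]
          have hx : 0 < T - max u v := by
            have := max_le hu.2 hv.2; linarith
          have hy : 0 < T - min u v := by
            have : min u v ≤ max u v := min_le_max; linarith
          have hA : (T - max u v) ^ (α - 1) * (T - max u v) ^ (α - 1)
              = (T - max u v) ^ (2 * α - 2) := by
            rw [← Real.rpow_add hx]; congr 1; ring
          have hB : (T - min u v) ^ (-α) * (T - min u v) ^ (-α)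
              = (T - min u v) ^ (-(2 * α)) := by
            rw [← Real.rpow_add hy]; congr 1; ring
          simp only [fker, if_pos (And.intro hu hv), Kk]
          rw [← hc2, ← hA, ← hB]; ring
        · rw [Set.indicator_of_notMem hv]
          simp only [fker]
          rw [if_neg (by tauto)]; ring
      rw [MeasureTheory.integral_congr_ae (ae_of_all _ hpt),
        MeasureTheory.setIntegral_indicator measurableSet_Icc,
        Set.inter_eq_self_of_subset_right (Set.Icc_subset_Icc le_rfl ht2.le)]
    · rw [Set.indicator_of_notMem hu]
      have hpt : ∀ v, fker T α t u v * fker T α t u v = 0 := by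
        intro v
        simp only [fker]
        rw [if_neg (by tauto)]; ring
      rw [MeasureTheory.integral_congr_ae (ae_of_all _ hpt), MeasureTheory.integral_zero]
  -- inner integral evaluation
  have hinner : Set.EqOn (fun u => ∫ v in Set.Icc (0:ℝ) t, Kk T α u v)
      (fun u => (2 / (2 * α - 1)) * (T - u) ^ (-1:ℝ)
        - (T ^ (1 - 2 * α) / (2 * α - 1)) * (T - u) ^ (2 * α - 2)
        - ((T - t) ^ (2 * α - 1) / (2 * α - 1)) * (T - u) ^ (-(2 * α)))
      (Set.Icc (0:ℝ) t) := by
    intro u hu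
    obtain ⟨hu0, hut⟩ := hu
    have huT : u < T := lt_of_le_of_lt hut ht2
    have hTu : 0 < T - u := by linarith
    simp only
    rw [MeasureTheory.integral_Icc_eq_integral_Ioc, ← intervalIntegral.integral_of_le ht0.le]
    have hKc : ContinuousOn (fun v => Kk T α u v) (Set.Icc (0:ℝ) t) := by
      apply ContinuousOn.mul
      · apply ContinuousOn.rpow_const
        · exact (continuous_const.sub (continuous_const.max continuous_id)).continuousOn
        · intro x hx
          exact Or.inl (ne_of_gt (by have := max_le hut hx.2; linarith))
      · apply ContinuousOn.rpow_const
        · exact (continuous_const.sub (continuous_const.min continuous_id)).continuousOn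
        · intro x hx
          have h1 : min u x ≤ u := min_le_left _ _
          exact Or.inl (ne_of_gt (by linarith))
    have hi1 : IntervalIntegrable (fun v => Kk T α u v) volume 0 u :=
      (hKc.mono (by rw [Set.uIcc_of_le hu0]; exact Set.Icc_subset_Icc le_rfl hut)).intervalIntegrable
    have hi2 : IntervalIntegrable (fun v => Kk T α u v) volume u t :=
      (hKc.mono (by rw [Set.uIcc_of_le hut]; exact Set.Icc_subset_Icc hu0 le_rfl)).intervalIntegrable
    rw [← intervalIntegral.integral_add_adjacent_intervals hi1 hi2]
    have e1 : ∫ v in (0:ℝ)..u, Kk T α u v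
        = (T - u) ^ (2 * α - 2) * ((T ^ (-(2 * α) + 1) - (T - u) ^ (-(2 * α) + 1)) / (-(2 * α) + 1)) := by
      have heq : Set.EqOn (fun v => Kk T α u v)
          (fun v => (T - u) ^ (2 * α - 2) * (T - v) ^ (-(2 * α))) (Set.uIcc 0 u) := by
        intro v hv
        rw [Set.uIcc_of_le hu0] at hv
        simp only [Kk, max_eq_left hv.2, min_eq_right hv.2]
      rw [intervalIntegral.integral_congr heq, intervalIntegral.integral_const_mul,
        int_rpow_sub hu0 huT (by intro h; linarith), sub_zero]
    have e2 : ∫ v in u..t, Kk T α u v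
        = (T - u) ^ (-(2 * α)) * (((T - u) ^ (2 * α - 2 + 1) - (T - t) ^ (2 * α - 2 + 1)) / (2 * α - 2 + 1)) := by
      have heq : Set.EqOn (fun v => Kk T α u v)
          (fun v => (T - u) ^ (-(2 * α)) * (T - v) ^ (2 * α - 2)) (Set.uIcc u t) := by
        intro v hv
        rw [Set.uIcc_of_le hut] at hv
        simp only [Kk, max_eq_right hv.1, min_eq_left hv.1]; ring
      rw [intervalIntegral.integral_congr heq, intervalIntegral.integral_const_mul,
        int_rpow_sub hut ht2 (by intro h; linarith)]
    rw [e1, e2, show -(2 * α) + 1 = 1 - 2 * α by ring, show 2 * α - 2 + 1 = 2 * α - 1 by ring]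
    have h1 : (T - u) ^ (2 * α - 2) * (T - u) ^ (1 - 2 * α) = (T - u) ^ (-1:ℝ) := by
      rw [← Real.rpow_add hTu]; congr 1; ring
    have h2 : (T - u) ^ (-(2 * α)) * (T - u) ^ (2 * α - 1) = (T - u) ^ (-1:ℝ) := by
      rw [← Real.rpow_add hTu]; congr 1; ring
    rw [show (T - u) ^ (2 * α - 2) * ((T ^ (1 - 2 * α) - (T - u) ^ (1 - 2 * α)) / (1 - 2 * α))
          + (T - u) ^ (-(2 * α)) * (((T - u) ^ (2 * α - 1) - (T - t) ^ (2 * α - 1)) / (2 * α - 1))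
        = ((T - u) ^ (2 * α - 2) * T ^ (1 - 2 * α) - (T - u) ^ (2 * α - 2) * (T - u) ^ (1 - 2 * α)) / (1 - 2 * α)
          + ((T - u) ^ (-(2 * α)) * (T - u) ^ (2 * α - 1) - (T - u) ^ (-(2 * α)) * (T - t) ^ (2 * α - 1)) / (2 * α - 1)
        by ring, h1, h2]
    have hb1 : (1 - 2 * α) ≠ 0 := by intro h; linarith
    field_simp
    ring
  -- outer integral
  have hii : ∀ p : ℝ, IntervalIntegrable (fun u : ℝ => (T - u) ^ p) volume 0 t := by
    intro p
    apply ContinuousOn.intervalIntegrable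
    apply ContinuousOn.rpow_const
    · exact (continuous_const.sub continuous_id).continuousOn
    · intro x hx
      rw [Set.uIcc_of_le ht0.le] at hx
      exact Or.inl (ne_of_gt (by have := hx.2; linarith))
  have iA : IntervalIntegrable (fun u : ℝ => (2 / (2 * α - 1)) * (T - u) ^ (-1:ℝ)) volume 0 t :=
    (hii _).const_mul _
  have iB : IntervalIntegrable (fun u : ℝ => (T ^ (1 - 2 * α) / (2 * α - 1)) * (T - u) ^ (2 * α - 2)) volume 0 t :=
    (hii _).const_mul _
  have iC : IntervalIntegrable (fun u : ℝ => ((T - t) ^ (2 * α - 1) / (2 * α - 1)) * (T - u) ^ (-(2 * α))) volume 0 t :=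
    (hii _).const_mul _
  -- assemble
  show ip T (fker T α t) (fker T α t) = _
  rw [ip, MeasureTheory.integral_congr_ae (ae_of_all _ hstep1),
    MeasureTheory.setIntegral_indicator measurableSet_Icc,
    Set.inter_eq_self_of_subset_right (Set.Icc_subset_Icc le_rfl ht2.le)]
  simp_rw [MeasureTheory.integral_const_mul]
  rw [MeasureTheory.setIntegral_congr_fun measurableSet_Icc hinner,
    MeasureTheory.integral_Icc_eq_integral_Ioc, ← intervalIntegral.integral_of_le ht0.le,
    intervalIntegral.integral_sub (iA.sub iB) iC, intervalIntegral.integral_sub iA iB,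
    intervalIntegral.integral_const_mul, intervalIntegral.integral_const_mul,
    intervalIntegral.integral_const_mul,
    int_inv_sub ht0.le ht2,
    int_rpow_sub ht0.le ht2 (show (2*α-2:ℝ) ≠ -1 by intro h; linarith),
    int_rpow_sub ht0.le ht2 (show (-(2*α):ℝ) ≠ -1 by intro h; linarith)]
  simp only [sub_zero]
  rw [show 2 * α - 2 + 1 = 2 * α - 1 by ring, show -(2 * α) + 1 = 1 - 2 * α by ring]
  -- final algebra
  rw [lam, habs,
    show (1 - 2 * α : ℝ) = -(2 * α - 1) by ring,
    Real.rpow_neg hT.le, Real.rpow_neg hat.le,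
    Real.div_rpow hat.le hT.le]
  have hP : (T : ℝ) ^ (2 * α - 1) ≠ 0 := (Real.rpow_pos_of_pos hT _).ne'
  have hQ : (T - t) ^ (2 * α - 1) ≠ 0 := (Real.rpow_pos_of_pos hat _).ne'
  have hla : Real.log (T - t) ≠ 0 := by intro h; rw [h] at hloga; linarith
  have hb : (2 * α - 1 : ℝ) ≠ 0 := hβ.ne'
  exact final_algebra _ _ _ _ _ hb hP hQ hla
end

section
/- As t ↑ T, λ_t·(2‖f_t‖² − 1) converges to log(T)/(2α−1) − 1/(2α−1)²; equivalently, 2‖f_t‖² − 1 = log(T)/((2α−1)λ_t) − 1/((2α−1)²λ_t) + o(1/λ_t). -/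
open MeasureTheory Real Filter Topology

lemma alg (β γ c P Q R S A B W : ℝ) (hγ : γ = -β)
    (h1 : P * Q = W) (h2 : R * S = W) :
    c * P * ((A - Q) / γ) + c * R * ((S - B) / β) = c / β * (2 * W - A * P - B * R) := by
  subst hγ
  rw [div_neg]
  linear_combination (c / β) * h1 + (c / β) * h2

lemma contOn (T p a b : ℝ) (hb : b < T) (hab : a ≤ b) :
    ContinuousOn (fun v : ℝ => (T - v) ^ p) (Set.uIcc a b) := by
  apply ContinuousOn.rpow_const (by fun_prop)
  intro x hx
  rw [Set.uIcc_of_le hab] at hx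
  exact Or.inl (by nlinarith [hx.2])

lemma integral_Tsub_rpow (T p a b : ℝ) (hp : p ≠ -1) (hab : a ≤ b) (hb : b < T) :
    ∫ v in a..b, (T - v) ^ p = ((T - a) ^ (p + 1) - (T - b) ^ (p + 1)) / (p + 1) := by
  have hp1 : p + 1 ≠ 0 := fun h => hp (by linarith)
  have key : ∀ v ∈ Set.uIcc a b,
      HasDerivAt (fun v : ℝ => -(T - v) ^ (p + 1) / (p + 1)) ((T - v) ^ p) v := by
    intro v hv
    rw [Set.uIcc_of_le hab] at hv
    have hv' : (0:ℝ) < T - v := by linarith [hv.2]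
    have h1 : HasDerivAt (fun v : ℝ => T - v) (-1) v := (hasDerivAt_id v).const_sub T
    have h2 := (Real.hasDerivAt_rpow_const (p := p + 1) (Or.inl hv'.ne')).comp v h1
    have h3 := h2.div_const (-(p+1))
    have h4 : ((p + 1) * (T - v) ^ (p + 1 - 1) * -1 / -(p+1)) = (T - v) ^ p := by
      rw [show p + 1 - 1 = p by ring, div_eq_iff (neg_ne_zero.mpr hp1)]
      ring
    rw [h4] at h3
    simp only [Function.comp, div_neg, neg_div] at h3 ⊢
    exact h3
  rw [intervalIntegral.integral_eq_sub_of_hasDerivAt key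
    ((contOn T p a b hb hab).intervalIntegrable)]
  field_simp
  ring

lemma integral_Tsub_inv (T a b : ℝ) (hab : a ≤ b) (hb : b < T) :
    ∫ v in a..b, (T - v) ^ (-1 : ℝ) = Real.log (T - a) - Real.log (T - b) := by
  have key : ∀ v ∈ Set.uIcc a b,
      HasDerivAt (fun v : ℝ => -Real.log (T - v)) ((T - v) ^ (-1:ℝ)) v := by
    intro v hv
    rw [Set.uIcc_of_le hab] at hv
    have hv' : (0:ℝ) < T - v := by linarith [hv.2]
    have h1 : HasDerivAt (fun v : ℝ => T - v) (-1) v := (hasDerivAt_id v).const_sub T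
    have h2 := (Real.hasDerivAt_log hv'.ne').comp v h1
    refine h2.neg.congr_deriv ?_
    rw [Real.rpow_neg_one]
    ring
  rw [intervalIntegral.integral_eq_sub_of_hasDerivAt key
    ((contOn T (-1) a b hb hab).intervalIntegrable)]
  ring

lemma reduceIcc (T t : ℝ) (ht0 : 0 ≤ t) (htT : t ≤ T) (g : ℝ → ℝ) :
    ∫ x in Set.Icc (0:ℝ) T, (Set.Icc (0:ℝ) t).indicator g x = ∫ x in (0:ℝ)..t, g x := by
  rw [setIntegral_indicator measurableSet_Icc,
    Set.inter_eq_self_of_subset_right (Set.Icc_subset_Icc le_rfl htT),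
    integral_Icc_eq_integral_Ioc, intervalIntegral.integral_of_le ht0]

lemma key_eval (T α t : ℝ) (hT : 0 < T) (hα : 1 / 2 < α) (ht0 : 0 < t) (htT : t < T)
    (h1 : T - t < 1) :
    lam T α t * (2 * normSq T (fker T α t) - 1) =
      Real.log T / (2 * α - 1) - 1 / (2 * α - 1) ^ 2 +
        (T - t) ^ (2 * α - 1) * T ^ (1 - 2 * α) / (2 * α - 1) ^ 2 := by
  have hβ : (0:ℝ) < 2 * α - 1 := by linarith
  have hne1 : (1:ℝ) - 2 * α ≠ 0 := ne_of_lt (by linarith)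
  have hTt : (0:ℝ) < T - t := by linarith
  have hL : Real.log (T - t) < 0 := Real.log_neg hTt h1
  have hlam_eq : lam T α t = -Real.log (T - t) / (2 * α - 1) := by
    rw [lam, abs_of_neg hL]
  have hlam : 0 < lam T α t := by
    rw [hlam_eq]; exact div_pos (by linarith) hβ
  set c0 : ℝ := 1 / (2 * Real.sqrt (lam T α t)) with hc0
  have hc0sq : c0 ^ 2 = 1 / (4 * lam T α t) := by
    rw [hc0, div_pow, mul_pow, Real.sq_sqrt hlam.le]
    norm_num
  set q : ℝ → ℝ → ℝ := fun u v =>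
    c0 ^ 2 * (T - max u v) ^ (2 * α - 2) * (T - min u v) ^ (-(2 * α)) with hq
  set G : ℝ → ℝ := fun u =>
    c0 ^ 2 / (2 * α - 1) * (2 * (T - u) ^ (-1:ℝ) - T ^ (1 - 2 * α) * (T - u) ^ (2 * α - 2)
      - (T - t) ^ (2 * α - 1) * (T - u) ^ (-(2 * α))) with hG
  -- squared kernel
  have key0 : ∀ u v, u ∈ Set.Icc (0:ℝ) t → v ∈ Set.Icc (0:ℝ) t →
      fker T α t u v * fker T α t u v = q u v := by
    intro u v hu hv
    have hA : (0:ℝ) < T - max u v := by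
      have : max u v ≤ t := max_le hu.2 hv.2; linarith
    have hB : (0:ℝ) < T - min u v := by
      have : min u v ≤ t := le_trans (min_le_left _ _) hu.2; linarith
    rw [fker, if_pos ⟨hu, hv⟩, hq]
    have e1 : (T - max u v) ^ (α-1) * (T - max u v) ^ (α-1) = (T - max u v) ^ (2*α-2) := by
      rw [← Real.rpow_add hA, show α - 1 + (α - 1) = 2*α - 2 by ring]
    have e2 : (T - min u v) ^ (-α) * (T - min u v) ^ (-α) = (T - min u v) ^ (-(2*α)) := by
      rw [← Real.rpow_add hB, show -α + -α = -(2*α) by ring]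
    calc c0 * (T - max u v) ^ (α-1) * (T - min u v) ^ (-α) *
          (c0 * (T - max u v) ^ (α-1) * (T - min u v) ^ (-α))
        = c0 ^ 2 * ((T - max u v) ^ (α-1) * (T - max u v) ^ (α-1)) *
            ((T - min u v) ^ (-α) * (T - min u v) ^ (-α)) := by ring
      _ = c0 ^ 2 * (T - max u v) ^ (2*α-2) * (T - min u v) ^ (-(2*α)) := by rw [e1, e2]
  -- inner integral
  have houter : (fun u => ∫ v in Set.Icc (0:ℝ) T, fker T α t u v * fker T α t u v)
      = (Set.Icc (0:ℝ) t).indicator G := by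
    funext u
    by_cases hu : u ∈ Set.Icc (0:ℝ) t
    · rw [Set.indicator_of_mem hu]
      have hfun : (fun v => fker T α t u v * fker T α t u v)
          = (Set.Icc (0:ℝ) t).indicator (q u) := by
        funext v
        by_cases hv : v ∈ Set.Icc (0:ℝ) t
        · rw [Set.indicator_of_mem hv]; exact key0 u v hu hv
        · rw [Set.indicator_of_notMem hv, fker, if_neg (fun h => hv h.2)]; ring
      rw [hfun, reduceIcc T t ht0.le htT.le]
      have hX : (0:ℝ) < T - u := by linarith [hu.2]
      have hcq : ContinuousOn (q u) (Set.Icc (0:ℝ) t) := by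
        apply ContinuousOn.mul
        · apply ContinuousOn.mul continuousOn_const
          apply ContinuousOn.rpow_const (by fun_prop)
          intro x hx; left
          have : max u x ≤ t := max_le hu.2 hx.2
          nlinarith
        · apply ContinuousOn.rpow_const (by fun_prop)
          intro x hx; left
          have : min u x ≤ t := le_trans (min_le_left _ _) hu.2
          nlinarith
      have hsub1 : Set.uIcc (0:ℝ) u ⊆ Set.Icc (0:ℝ) t := by
        rw [Set.uIcc_of_le hu.1]; exact Set.Icc_subset_Icc le_rfl hu.2
      have hsub2 : Set.uIcc u t ⊆ Set.Icc (0:ℝ) t := by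
        rw [Set.uIcc_of_le hu.2]; exact Set.Icc_subset_Icc hu.1 le_rfl
      have hI1 : IntervalIntegrable (q u) volume 0 u := (hcq.mono hsub1).intervalIntegrable
      have hI2 : IntervalIntegrable (q u) volume u t := (hcq.mono hsub2).intervalIntegrable
      have hsplit : ∫ v in (0:ℝ)..t, q u v = (∫ v in (0:ℝ)..u, q u v) + ∫ v in u..t, q u v :=
        (intervalIntegral.integral_add_adjacent_intervals hI1 hI2).symm
      have e1 : ∫ v in (0:ℝ)..u, q u v
          = (c0 ^ 2 * (T - u) ^ (2*α-2)) *
              ((T ^ (1 - 2*α) - (T - u) ^ (1 - 2*α)) / (1 - 2*α)) := by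
        rw [intervalIntegral.integral_congr
          (g := fun v => (c0 ^ 2 * (T - u) ^ (2*α-2)) * (T - v) ^ (-(2*α)))
          (fun v hv => by
            rw [Set.uIcc_of_le hu.1] at hv
            simp only [hq, max_eq_left hv.2, min_eq_right hv.2]),
          intervalIntegral.integral_const_mul,
          integral_Tsub_rpow T (-(2*α)) 0 u (by intro h; nlinarith) hu.1 (by linarith [hu.2]),
          sub_zero, show -(2*α) + 1 = 1 - 2*α by ring]
      have e2 : ∫ v in u..t, q u v
          = (c0 ^ 2 * (T - u) ^ (-(2*α))) *
              (((T - u) ^ (2*α - 1) - (T - t) ^ (2*α - 1)) / (2*α - 1)) := by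
        rw [intervalIntegral.integral_congr
          (g := fun v => (c0 ^ 2 * (T - u) ^ (-(2*α))) * (T - v) ^ (2*α-2))
          (fun v hv => by
            rw [Set.uIcc_of_le hu.2] at hv
            simp only [hq, max_eq_right hv.1, min_eq_left hv.1]
            ring),
          intervalIntegral.integral_const_mul,
          integral_Tsub_rpow T (2*α-2) u t (by intro h; nlinarith) hu.2 htT,
          show 2*α - 2 + 1 = 2*α - 1 by ring]
      rw [hsplit, e1, e2, hG]
      have m1 : (T - u) ^ (2*α-2) * (T - u) ^ (1 - 2*α) = (T - u) ^ (-1:ℝ) := by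
        rw [← Real.rpow_add hX, show 2*α - 2 + (1 - 2*α) = (-1:ℝ) by ring]
      have m2 : (T - u) ^ (-(2*α)) * (T - u) ^ (2*α - 1) = (T - u) ^ (-1:ℝ) := by
        rw [← Real.rpow_add hX, show -(2*α) + (2*α - 1) = (-1:ℝ) by ring]
      exact alg (2*α - 1) (1 - 2*α) (c0 ^ 2) ((T - u) ^ (2*α-2)) ((T - u) ^ (1 - 2*α))
        ((T - u) ^ (-(2*α))) ((T - u) ^ (2*α - 1)) (T ^ (1 - 2*α)) ((T - t) ^ (2*α - 1))
        ((T - u) ^ (-1:ℝ)) (by ring) m1 m2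
    · rw [Set.indicator_of_notMem hu]
      have hz : ∀ v, fker T α t u v = 0 := fun v => by
        rw [fker, if_neg (fun h => hu h.1)]
      simp [hz]
  -- outer integral
  have hNS : normSq T (fker T α t) = ∫ u in (0:ℝ)..t, G u := by
    simp only [normSq, ip]
    rw [houter, reduceIcc T t ht0.le htT.le]
  have i1 : IntervalIntegrable (fun u : ℝ => (T - u) ^ (-1:ℝ)) volume 0 t :=
    (contOn T (-1) 0 t htT ht0.le).intervalIntegrable
  have i2 : IntervalIntegrable (fun u : ℝ => (T - u) ^ (2*α - 2)) volume 0 t :=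
    (contOn T (2*α - 2) 0 t htT ht0.le).intervalIntegrable
  have i3 : IntervalIntegrable (fun u : ℝ => (T - u) ^ (-(2*α))) volume 0 t :=
    (contOn T (-(2*α)) 0 t htT ht0.le).intervalIntegrable
  have hGint : ∫ u in (0:ℝ)..t, G u
      = c0 ^ 2 / (2*α - 1) * (2 * (Real.log T - Real.log (T - t))
          - T ^ (1 - 2*α) * ((T ^ (2*α - 1) - (T - t) ^ (2*α - 1)) / (2*α - 1))
          - (T - t) ^ (2*α - 1) * ((T ^ (1 - 2*α) - (T - t) ^ (1 - 2*α)) / (1 - 2*α))) := by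
    rw [hG]
    rw [intervalIntegral.integral_const_mul]
    congr 1
    rw [intervalIntegral.integral_sub ((i1.const_mul 2).sub (i2.const_mul (T ^ (1 - 2*α))))
        (i3.const_mul ((T - t) ^ (2*α - 1))),
      intervalIntegral.integral_sub (i1.const_mul 2) (i2.const_mul (T ^ (1 - 2*α))),
      intervalIntegral.integral_const_mul, intervalIntegral.integral_const_mul,
      intervalIntegral.integral_const_mul,
      integral_Tsub_inv T 0 t ht0.le htT,
      integral_Tsub_rpow T (2*α - 2) 0 t (by intro h; nlinarith) ht0.le htT,
      integral_Tsub_rpow T (-(2*α)) 0 t (by intro h; nlinarith) ht0.le htT,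
      sub_zero, show 2*α - 2 + 1 = 2*α - 1 by ring, show -(2*α) + 1 = 1 - 2*α by ring]
  -- final algebra
  have fAB : T ^ (1 - 2*α) * T ^ (2*α - 1) = 1 := by
    rw [← Real.rpow_add hT, show 1 - 2*α + (2*α - 1) = 0 by ring, Real.rpow_zero]
  have fB : (T - t) ^ (2*α - 1) * (T - t) ^ (1 - 2*α) = 1 := by
    rw [← Real.rpow_add hTt, show 2*α - 1 + (1 - 2*α) = 0 by ring, Real.rpow_zero]
  have hApos : (0:ℝ) < T ^ (1 - 2*α) := Real.rpow_pos_of_pos hT _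
  have hBpos : (0:ℝ) < (T - t) ^ (2*α - 1) := Real.rpow_pos_of_pos hTt _
  have hA' : T ^ (2*α - 1) = 1 / T ^ (1 - 2*α) := eq_one_div_of_mul_eq_one_left (by linear_combination fAB)
  have hB' : (T - t) ^ (1 - 2*α) = 1 / (T - t) ^ (2*α - 1) := eq_one_div_of_mul_eq_one_left (by linear_combination fB)
  rw [hNS, hGint, hc0sq, hlam_eq, hA', hB']
  have hL' : Real.log (T - t) ≠ 0 := hL.ne
  field_simp
  ring

theorem stmt_1 (T α : ℝ) (hT : 0 < T) (hα : 1 / 2 < α) :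
    Tendsto (fun t => lam T α t * (2 * normSq T (fker T α t) - 1))
      (𝓝[<] T) (𝓝 (Real.log T / (2 * α - 1) - 1 / (2 * α - 1) ^ 2)) := by
  have hβ : (0:ℝ) < 2 * α - 1 := by linarith
  have hcT : max 0 (T - 1) < T := max_lt hT (by linarith)
  have hmem : Set.Ioo (max 0 (T - 1)) T ∈ 𝓝[<] T :=
    Ioo_mem_nhdsLT_of_mem ⟨hcT, le_refl T⟩
  have heq : ∀ᶠ t in 𝓝[<] T, lam T α t * (2 * normSq T (fker T α t) - 1)
      = Real.log T / (2 * α - 1) - 1 / (2 * α - 1) ^ 2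
        + (T - t) ^ (2 * α - 1) * T ^ (1 - 2 * α) / (2 * α - 1) ^ 2 := by
    filter_upwards [hmem] with t ht
    refine key_eval T α t hT hα ?_ ht.2 ?_
    · exact lt_of_le_of_lt (le_max_left 0 (T - 1)) ht.1
    · have h1 := ht.1
      have h2 := le_max_right 0 (T - 1)
      linarith
  have hlim : Tendsto (fun t : ℝ => Real.log T / (2 * α - 1) - 1 / (2 * α - 1) ^ 2
        + (T - t) ^ (2 * α - 1) * T ^ (1 - 2 * α) / (2 * α - 1) ^ 2)
      (𝓝[<] T) (𝓝 (Real.log T / (2 * α - 1) - 1 / (2 * α - 1) ^ 2)) := by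
    have h0 : Tendsto (fun t : ℝ => T - t) (𝓝[<] T) (𝓝 0) := by
      have h : Tendsto (fun t : ℝ => T - t) (𝓝 T) (𝓝 (T - T)) :=
        (continuous_const.sub continuous_id).tendsto T
      rw [sub_self] at h
      exact h.mono_left nhdsWithin_le_nhds
    have h2 : Tendsto (fun x : ℝ => x ^ (2 * α - 1)) (𝓝 0) (𝓝 0) := by
      have h := (Real.continuousAt_rpow_const 0 (2 * α - 1) (Or.inr hβ.le)).tendsto
      simpa [Real.zero_rpow hβ.ne'] using h
    have h5 := (tendsto_const_nhds
        (x := Real.log T / (2 * α - 1) - 1 / (2 * α - 1) ^ 2)).add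
      (((h2.comp h0).mul_const (T ^ (1 - 2 * α))).div_const ((2 * α - 1) ^ 2))
    simpa [Function.comp] using h5
  exact Tendsto.congr' (EventuallyEq.symm heq) hlim
end

section
/- For every t with max(0, T − 1/e) < t < T, the quantity b_t := (1/λ_t)·∫₀ᵗ ∫₀ˢ (T−s)^{2α−2}(T−u)^{−2α} du ds satisfies the exact identity b_t = 1 + log(T)/|log(T−t)| − (1/((2α−1)|log(T−t)|))·(1 − ((T−t)/T)^{2α−1}). -/
open MeasureTheory Real Filter Topology

theorem stmt_2 (T α : ℝ) (hT : 0 < T) (hα : 1 / 2 < α)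
    (t : ℝ) (ht1 : max 0 (T - 1 / Real.exp 1) < t) (ht2 : t < T) :
    bfun T α t =
      1 + Real.log T / |Real.log (T - t)|
        - (1 / ((2 * α - 1) * |Real.log (T - t)|)) * (1 - ((T - t) / T) ^ (2 * α - 1)) := by
  have hTt : 0 < T - t := by linarith
  have ht0 : 0 < t := lt_of_le_of_lt (le_max_left _ _) ht1
  have hα1 : 0 < 2 * α - 1 := by linarith
  have hlog : Real.log (T - t) < -1 := by
    have h1 : T - t < 1 / Real.exp 1 := by
      have := lt_of_le_of_lt (le_max_right 0 (T - 1 / Real.exp 1)) ht1; linarith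
    calc Real.log (T - t) < Real.log (1 / Real.exp 1) := Real.log_lt_log hTt h1
      _ = -1 := by
        rw [Real.log_div one_ne_zero (Real.exp_ne_zero 1), Real.log_one, Real.log_exp]; ring
  have habs : |Real.log (T - t)| = -Real.log (T - t) := abs_of_neg (by linarith)
  -- inner integral
  have hinner : Set.EqOn
      (fun s => ∫ u in (0:ℝ)..s, (T - s) ^ (2 * α - 2) * (T - u) ^ (-(2 * α)))
      (fun s => ((T - s) ^ (-1:ℝ) - T ^ (1 - 2*α) * (T - s) ^ (2*α - 2)) / (2*α - 1))
      (Set.uIcc 0 t) := by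
    intro s hs
    rw [Set.uIcc_of_le ht0.le] at hs
    have hTs : 0 < T - s := by have := hs.2; linarith
    simp only
    rw [intervalIntegral.integral_const_mul]
    have : (∫ u in (0:ℝ)..s, (T - u) ^ (-(2 * α)))
        = ∫ x in T - s..T - 0, (fun x : ℝ => x ^ (-(2 * α))) x :=
      (intervalIntegral.integral_comp_sub_left (fun x : ℝ => x ^ (-(2 * α))) T).symm ▸ rfl
    rw [show (∫ u in (0:ℝ)..s, (T - u) ^ (-(2 * α)))
        = ∫ x in T - s..T - 0, (fun x : ℝ => x ^ (-(2 * α))) x from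
      (intervalIntegral.integral_comp_sub_left (fun x : ℝ => x ^ (-(2 * α))) T)]
    rw [integral_rpow (Or.inr ⟨by intro h; nlinarith [h], Set.notMem_uIcc_of_lt hTs (by linarith)⟩)]
    have hne : (T - s) ≠ 0 := hTs.ne'
    have hcomb : (T - s) ^ (2*α - 2) * (T - s) ^ (-(2*α) + 1) = (T - s) ^ (-1:ℝ) := by
      rw [← Real.rpow_add hTs]; ring_nf
    have h2 : -(2*α) + 1 = 1 - 2*α := by ring
    have hd : (1:ℝ) - 2*α ≠ 0 := by intro h; nlinarith
    field_simp
    rw [h2, ← hcomb]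
    field_simp
    ring_nf
  have hcont : ∀ c : ℝ, ContinuousOn (fun s => (T - s) ^ c) (Set.uIcc 0 t) := by
    intro c
    apply ContinuousOn.rpow_const (continuousOn_const.sub continuousOn_id)
    intro x hx
    rw [Set.uIcc_of_le ht0.le] at hx
    exact Or.inl (by simp only [Pi.sub_apply, id_eq]; have := hx.2; intro h; nlinarith)
  have h1int : IntervalIntegrable (fun s => (T - s) ^ (-1:ℝ)) volume 0 t :=
    (hcont (-1)).intervalIntegrable
  have h2int : IntervalIntegrable (fun s => T ^ (1 - 2*α) * (T - s) ^ (2*α - 2)) volume 0 t :=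
    ((hcont (2*α - 2)).const_smul (T ^ (1 - 2*α))).intervalIntegrable
  have I1 : (∫ s in (0:ℝ)..t, (T - s) ^ (-1:ℝ)) = Real.log T - Real.log (T - t) := by
    rw [show (∫ s in (0:ℝ)..t, (T - s) ^ (-1:ℝ))
        = ∫ x in T - t..T - 0, (fun x : ℝ => x ^ (-1:ℝ)) x from
      intervalIntegral.integral_comp_sub_left (fun x : ℝ => x ^ (-1:ℝ)) T]
    simp only [Real.rpow_neg_one, sub_zero]
    rw [integral_inv (Set.notMem_uIcc_of_lt hTt hT)]
    rw [Real.log_div hT.ne' hTt.ne']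
  have I2 : (∫ s in (0:ℝ)..t, (T - s) ^ (2*α - 2))
      = (T ^ (2*α - 1) - (T - t) ^ (2*α - 1)) / (2*α - 1) := by
    rw [show (∫ s in (0:ℝ)..t, (T - s) ^ (2*α - 2))
        = ∫ x in T - t..T - 0, (fun x : ℝ => x ^ (2*α - 2)) x from
      intervalIntegral.integral_comp_sub_left (fun x : ℝ => x ^ (2*α - 2)) T]
    rw [sub_zero, integral_rpow (Or.inl (by linarith))]
    ring_nf
  rw [bfun, intervalIntegral.integral_congr hinner]
  have hsplit : (∫ s in (0:ℝ)..t,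
      ((T - s) ^ (-1:ℝ) - T ^ (1 - 2*α) * (T - s) ^ (2*α - 2)) / (2*α - 1))
      = ((Real.log T - Real.log (T - t)) -
          T ^ (1 - 2*α) * ((T ^ (2*α - 1) - (T - t) ^ (2*α - 1)) / (2*α - 1))) / (2*α - 1) := by
    rw [intervalIntegral.integral_div, intervalIntegral.integral_sub h1int h2int,
      intervalIntegral.integral_const_mul, I1, I2]
  rw [hsplit, lam, habs]
  have hTpow : (0:ℝ) < T ^ (2*α - 1) := Real.rpow_pos_of_pos hT _
  have hTtpow : (0:ℝ) ≤ (T - t) ^ (2*α - 1) := Real.rpow_nonneg hTt.le _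
  rw [Real.div_rpow hTt.le hT.le,
    show (1 - 2*α) = -(2*α - 1) by ring, Real.rpow_neg hT.le]
  have hlogne : Real.log (T - t) ≠ 0 := by intro h; rw [h] at hlog; linarith
  have key : ∀ L LT P Q c : ℝ, L ≠ 0 → c ≠ 0 → P ≠ 0 →
      1 / (-L / c) * ((LT - L - P⁻¹ * ((P - Q) / c)) / c)
        = 1 + LT / (-L) - 1 / (c * (-L)) * (1 - Q / P) := by
    intro L LT P Q c hL hc hP
    field_simp
    ring
  exact key (Real.log (T - t)) (Real.log T) (T ^ (2*α - 1)) ((T - t) ^ (2*α - 1)) (2*α - 1)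
    hlogne hα1.ne' hTpow.ne'
end

section
/- As t ↑ T, λ_t·(b_t² − 1) converges to 2·log(T)/(2α−1) − 2/(2α−1)²; equivalently, b_t² − 1 = 2log(T)/((2α−1)λ_t) − 2/((2α−1)²λ_t) + o(1/λ_t). -/
open MeasureTheory Real Filter Topology

open intervalIntegral in
lemma int_Trpow (T r c d : ℝ) (hc : c < T) (hd : d < T) (hr : r ≠ -1) :
    ∫ u in c..d, (T - u) ^ r = ((T - c) ^ (r + 1) - (T - d) ^ (r + 1)) / (r + 1) := by
  rw [show (fun u => (T - u) ^ r) = fun u => (fun x : ℝ => x ^ r) (T - u) from rfl]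
  rw [intervalIntegral.integral_comp_sub_left (fun x : ℝ => x ^ r) T]
  rw [integral_rpow (Or.inr ⟨hr, ?_⟩)]
  intro h0
  rcases Set.mem_uIcc.1 h0 with ⟨h1, h2⟩ | ⟨h1, h2⟩ <;> linarith

open intervalIntegral in
lemma int_Tinv (T c d : ℝ) (hc : c < T) (hd : d < T) :
    ∫ u in c..d, (T - u) ^ (-1 : ℝ) = Real.log (T - c) - Real.log (T - d) := by
  rw [show (fun u => (T - u) ^ (-1 : ℝ)) = fun u => (fun x : ℝ => x ^ (-1 : ℝ)) (T - u) from rfl]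
  rw [intervalIntegral.integral_comp_sub_left (fun x : ℝ => x ^ (-1 : ℝ)) T]
  have h0 : (0 : ℝ) ∉ Set.uIcc (T - d) (T - c) := by
    intro h0
    rcases Set.mem_uIcc.1 h0 with ⟨h1, h2⟩ | ⟨h1, h2⟩ <;> linarith
  simp_rw [Real.rpow_neg_one]
  rw [show (fun x : ℝ => x⁻¹) = fun x : ℝ => 1 / x by funext x; rw [one_div]]
  rw [integral_one_div h0, Real.log_div (by linarith) (by linarith)]

theorem stmt_3 (T α : ℝ) (hT : 0 < T) (hα : 1 / 2 < α) :
    Tendsto (fun t => lam T α t * ((bfun T α t) ^ 2 - 1))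
      (𝓝[<] T) (𝓝 (2 * Real.log T / (2 * α - 1) - 2 / (2 * α - 1) ^ 2)) := by
  have hD : 0 < 2 * α - 1 := by linarith
  set D := 2 * α - 1 with hDdef
  set L : ℝ → ℝ := fun t => Real.log T / D - (1 - (T - t) ^ D * T ^ (-D)) / D ^ 2 with hLdef
  have hev : (fun t => lam T α t * ((bfun T α t) ^ 2 - 1)) =ᶠ[𝓝[<] T]
      (fun t => L t * (2 + L t / lam T α t)) := by
    have hmax : max (T - 1) 0 < T := by
      rcases le_total (T - 1) 0 with h | h
      · rw [max_eq_right h]; exact hT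
      · rw [max_eq_left h]; linarith
    filter_upwards [Ioo_mem_nhdsLT hmax] with t ht
    obtain ⟨ht1, ht2⟩ := ht
    have ht0 : 0 < t := lt_of_le_of_lt (le_max_right _ _) ht1
    have hTt : 0 < T - t := by linarith
    have hTt1 : T - t < 1 := by
      have := lt_of_le_of_lt (le_max_left (T - 1) 0) ht1; linarith
    have hlog : Real.log (T - t) < 0 := Real.log_neg hTt hTt1
    have hlam : lam T α t = -Real.log (T - t) / D := by
      unfold lam; rw [abs_of_neg hlog, hDdef]
    have hlam0 : lam T α t ≠ 0 := by
      rw [hlam]; exact div_ne_zero (by linarith) (ne_of_gt hD)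
    have hinner : Set.EqOn
        (fun s => ∫ u in (0:ℝ)..s, (T - s) ^ (2 * α - 2) * (T - u) ^ (-(2 * α)))
        (fun s => (1 / (1 - 2 * α)) *
          (T ^ (1 - 2 * α) * (T - s) ^ (2 * α - 2) - (T - s) ^ (-1 : ℝ)))
        (Set.uIcc (0:ℝ) t) := by
      intro s hs
      rw [Set.uIcc_of_le ht0.le] at hs
      have hsT : s < T := lt_of_le_of_lt hs.2 ht2
      have hTs : 0 < T - s := by linarith
      simp only
      rw [intervalIntegral.integral_const_mul,
        int_Trpow T (-(2 * α)) 0 s hT hsT (by intro h; linarith), sub_zero]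
      have e1 : (T - s) ^ (2 * α - 2) * (T - s) ^ (-(2 * α) + 1) = (T - s) ^ (-1 : ℝ) := by
        rw [← Real.rpow_add hTs]; congr 1; ring
      rw [show (1 - 2 * α : ℝ) = -(2 * α) + 1 by ring, ← e1]
      have hne : (-(2 * α) + 1 : ℝ) ≠ 0 := by intro h; linarith
      field_simp
    have hcont : ∀ r : ℝ, IntervalIntegrable (fun s => (T - s) ^ (r : ℝ)) volume 0 t := by
      intro r
      apply ContinuousOn.intervalIntegrable
      apply ContinuousOn.rpow_const (continuousOn_const.sub continuousOn_id)
      intro x hx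
      rw [Set.uIcc_of_le ht0.le] at hx
      exact Or.inl (ne_of_gt (by have := hx.2; simp only [Pi.sub_apply, id]; linarith))
    have hI : (∫ s in (0:ℝ)..t, ∫ u in (0:ℝ)..s, (T - s) ^ (2 * α - 2) * (T - u) ^ (-(2 * α)))
        = lam T α t + L t := by
      rw [intervalIntegral.integral_congr hinner, intervalIntegral.integral_const_mul,
        intervalIntegral.integral_sub ((hcont (2 * α - 2)).const_mul _) (hcont (-1)),
        intervalIntegral.integral_const_mul,
        int_Trpow T (2 * α - 2) 0 t hT ht2 (by intro h; linarith),
        int_Tinv T 0 t hT ht2, sub_zero]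
      rw [hlam]
      simp only [hLdef]
      rw [show (2 * α - 2 + 1 : ℝ) = D by rw [hDdef]; ring,
        show (1 - 2 * α : ℝ) = -D by rw [hDdef]; ring]
      simp only [Real.rpow_neg hT.le]
      have hTD : (0 : ℝ) < T ^ D := Real.rpow_pos_of_pos hT D
      have hD0 : D ≠ 0 := ne_of_gt hD
      field_simp
      ring
    have hb : bfun T α t = (lam T α t + L t) / lam T α t := by
      rw [bfun, hI]; ring
    rw [hb]
    field_simp
    ring
  refine Tendsto.congr' hev.symm ?_
  have h0 : Tendsto (fun t => T - t) (𝓝[<] T) (𝓝 0) := by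
    have h := (continuous_sub_left T).tendsto T
    rw [sub_self] at h
    exact h.mono_left nhdsWithin_le_nhds
  have hpow : Tendsto (fun t => (T - t) ^ D) (𝓝[<] T) (𝓝 0) := by
    have hc : ContinuousAt (fun x : ℝ => x ^ D) 0 :=
      Real.continuousAt_rpow_const 0 D (Or.inr hD.le)
    have := hc.tendsto.comp h0
    simpa [Real.zero_rpow (ne_of_gt hD), Function.comp_def] using this
  have hL : Tendsto L (𝓝[<] T) (𝓝 (Real.log T / D - 1 / D ^ 2)) := by
    rw [hLdef]
    have h1 : Tendsto (fun t => Real.log T / D - (1 - (T - t) ^ D * T ^ (-D)) / D ^ 2)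
        (𝓝[<] T) (𝓝 (Real.log T / D - (1 - 0 * T ^ (-D)) / D ^ 2)) :=
      tendsto_const_nhds.sub ((tendsto_const_nhds.sub (hpow.mul tendsto_const_nhds)).div_const _)
    simpa using h1
  have hlamTop : Tendsto (fun t => lam T α t) (𝓝[<] T) atTop := by
    have hlog : Tendsto (fun t => Real.log (T - t)) (𝓝[<] T) atBot := by
      apply Real.tendsto_log_nhdsGT_zero.comp
      rw [tendsto_nhdsWithin_iff]
      refine ⟨h0, ?_⟩
      filter_upwards [self_mem_nhdsWithin] with t ht
      exact Set.mem_Ioi.2 (sub_pos.2 (Set.mem_Iio.1 ht))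
    have habs : Tendsto (fun t => |Real.log (T - t)|) (𝓝[<] T) atTop :=
      tendsto_abs_atBot_atTop.comp hlog
    have := habs.atTop_div_const hD
    simpa [lam, hDdef] using this
  have hq : Tendsto (fun t => L t / lam T α t) (𝓝[<] T) (𝓝 0) := hL.div_atTop hlamTop
  have h2 : Tendsto (fun t : ℝ => (2 : ℝ) + L t / lam T α t) (𝓝[<] T) (𝓝 (2 + 0)) :=
    tendsto_const_nhds.add hq
  have hfin := hL.mul h2
  rw [show (2 * Real.log T / D - 2 / D ^ 2 : ℝ)
      = (Real.log T / D - 1 / D ^ 2) * (2 + 0) by ring]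
  exact hfin
end

section
/- For every t with max(0, T − 1/e) < t < T, the squared norm of the contraction satisfies the exact decomposition ‖f_t ⊗₁ f_t‖² = A_{t,1} + A_{t,2}, where A_{t,1} := (1/λ_t²)·∫_{0<x₁<x₂<x₃<x₄<t} (T−x₄)^{2α−2}(T−x₃)^{−1}(T−x₂)^{−1}(T−x₁)^{−2α} dx₁dx₂dx₃dx₄ and A_{t,2} := (1/(2λ_t²))·∫_{0<x₁<x₃<x₂<x₄<t} (T−x₄)^{2α−2}(T−x₂)^{2α−2}(T−x₃)^{−2α}(T−x₁)^{−2α} dx₁dx₃dx₂dx₄. -/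
open MeasureTheory Real Filter Topology

/-! ### Auxiliary general lemmas -/

section Helpers

variable {X : Type*} [MeasurableSpace X]

lemma intg {μ : Measure X} [IsFiniteMeasure μ] {f : X → ℝ} {C : ℝ}
    (hf : AEStronglyMeasurable f μ) (hC : ∀ x, |f x| ≤ C) : Integrable f μ :=
  Integrable.mono' (integrable_const C) hf
    (Filter.Eventually.of_forall (by simpa [Real.norm_eq_abs] using hC))

lemma dzero {μ : Measure X} {S : Set X} (hS : μ S = 0) {W : X → ℝ}
    (hsupp : ∀ z, W z ≠ 0 → z ∈ S) : ∫ z, W z ∂μ = 0 := by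
  refine integral_eq_zero_of_ae ((ae_iff).2 ?_)
  exact measure_mono_null (fun z hz => hsupp z hz) hS

lemma integral_perm {μ : Measure X} {e : X → X} (he : Measurable e)
    (hmap : μ.map e = μ) {W : X → ℝ} (hW : AEStronglyMeasurable W μ) :
    ∫ z, W z ∂μ = ∫ z, W (e z) ∂μ := by
  have h2 : AEStronglyMeasurable W (μ.map e) := by rw [hmap]; exact hW
  rw [← integral_map he.aemeasurable h2, hmap]

lemma ite_mul_abs_le (P : Prop) [Decidable P] (w : ℝ) :
    |(if P then (1:ℝ) else 0) * w| ≤ |w| := by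
  by_cases h : P <;> simp [h, abs_nonneg]

lemma shrink {S s : Set ℝ} (hS : MeasurableSet S) (hs : MeasurableSet s) (hsub : s ⊆ S)
    {F : ℝ → ℝ} (h0 : ∀ y ∈ S, y ∉ s → F y = 0) :
    ∫ y in S, F y = ∫ y in s, F y := by
  have hEq : Set.EqOn F (s.indicator F) S := by
    intro y hy
    by_cases h : y ∈ s
    · simp [Set.indicator_of_mem h]
    · simp [Set.indicator_of_notMem h, h0 y hy h]
  rw [setIntegral_congr_fun hS hEq, setIntegral_indicator hs,
    Set.inter_eq_self_of_subset_right hsub]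

lemma diag_null (ν : Measure ℝ) [SFinite ν] [NullSingletonClass ν] :
    (ν.prod ν) {p : ℝ × ℝ | p.1 = p.2} = 0 := by
  have hm : MeasurableSet {p : ℝ × ℝ | p.1 = p.2} :=
    measurableSet_eq_fun measurable_fst measurable_snd
  rw [Measure.prod_apply hm]
  have h : ∀ x : ℝ, ν (Prod.mk x ⁻¹' {p : ℝ × ℝ | p.1 = p.2}) = 0 := by
    intro x
    have hx : (Prod.mk x ⁻¹' {p : ℝ × ℝ | p.1 = p.2}) = {x} := by
      ext y; simp [eq_comm]
    rw [hx]; exact measure_singleton x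
  simp [h]

lemma split2 {μ : Measure X} [IsFiniteMeasure μ]
    {W : X → ℝ} {g h : X → ℝ}
    (hWm : Measurable W) {C : ℝ} (hC : ∀ z, |W z| ≤ C)
    (hg : Measurable g) (hh : Measurable h)
    {e : X → X} (he : Measurable e) (hmap : μ.map e = μ)
    (hWe : ∀ z, W (e z) = W z) (hge : ∀ z, g (e z) = h z) (hhe : ∀ z, h (e z) = g z)
    (hnull : μ {z | h z = g z} = 0) :
    ∫ z, W z ∂μ = 2 * ∫ z, (if h z ≤ g z then (1:ℝ) else 0) * W z ∂μ := by
  set p1 : X → ℝ := fun z => (if h z ≤ g z then (1:ℝ) else 0) * W z with hp1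
  set p2 : X → ℝ := fun z => (if g z < h z then (1:ℝ) else 0) * W z with hp2
  set p3 : X → ℝ := fun z => (if h z < g z then (1:ℝ) else 0) * W z with hp3
  set p4 : X → ℝ := fun z => (if h z = g z then (1:ℝ) else 0) * W z with hp4
  have hb : ∀ (q : X → ℝ), (∀ z, |q z| ≤ |W z|) → ∀ z, |q z| ≤ C :=
    fun q hq z => le_trans (hq z) (hC z)
  have int1 : Integrable p1 μ :=
    intg ((Measurable.ite (measurableSet_le hh hg) measurable_const measurable_const).mul
      hWm).aestronglyMeasurable (hb p1 (fun z => ite_mul_abs_le _ _))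
  have int2 : Integrable p2 μ :=
    intg ((Measurable.ite (measurableSet_lt hg hh) measurable_const measurable_const).mul
      hWm).aestronglyMeasurable (hb p2 (fun z => ite_mul_abs_le _ _))
  have int3 : Integrable p3 μ :=
    intg ((Measurable.ite (measurableSet_lt hh hg) measurable_const measurable_const).mul
      hWm).aestronglyMeasurable (hb p3 (fun z => ite_mul_abs_le _ _))
  have int4 : Integrable p4 μ :=
    intg ((Measurable.ite (measurableSet_eq_fun hh hg) measurable_const measurable_const).mul
      hWm).aestronglyMeasurable (hb p4 (fun z => ite_mul_abs_le _ _))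
  have hsplit : ∀ z, W z = p1 z + p2 z := by
    intro z
    by_cases hz : h z ≤ g z
    · simp [hp1, hp2, hz, not_lt.2 hz]
    · simp [hp1, hp2, hz, not_le.1 hz]
  have e1 : ∫ z, W z ∂μ = ∫ z, p1 z ∂μ + ∫ z, p2 z ∂μ := by
    rw [← integral_add int1 int2]
    exact integral_congr_ae (Filter.Eventually.of_forall hsplit)
  have e2 : ∫ z, p2 z ∂μ = ∫ z, p3 z ∂μ := by
    rw [integral_perm he hmap int2.aestronglyMeasurable]
    refine integral_congr_ae (Filter.Eventually.of_forall (fun z => ?_))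
    simp only [hp2, hp3, hge, hhe, hWe]
  have hsplit2 : ∀ z, p1 z = p3 z + p4 z := by
    intro z
    rcases lt_trichotomy (h z) (g z) with hlt | heq | hgt
    · simp [hp1, hp3, hp4, hlt, le_of_lt hlt, ne_of_lt hlt]
    · simp [hp1, hp3, hp4, heq, le_of_eq heq]
    · simp [hp1, hp3, hp4, not_le.2 hgt, not_lt.2 (le_of_lt hgt), ne_of_gt hgt]
  have e4 : ∫ z, p4 z ∂μ = 0 := by
    refine dzero hnull (fun z hz => ?_)
    by_contra hne
    simp only [hp4, Set.mem_setOf_eq] at hne hz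
    rw [if_neg hne, zero_mul] at hz
    exact hz rfl
  have e3 : ∫ z, p1 z ∂μ = ∫ z, p3 z ∂μ := by
    have h5 := integral_congr_ae (Filter.Eventually.of_forall hsplit2) (μ := μ)
    rw [h5, integral_add int3 int4, e4, add_zero]
  rw [e1, e2, ← e3]; ring

end Helpers

section Prod4

variable (ν : Measure ℝ) [IsFiniteMeasure ν]

lemma iter_eq_prod4 (W : (ℝ×ℝ)×(ℝ×ℝ) → ℝ) (hm : Measurable W) {C : ℝ}
    (hC : ∀ z, |W z| ≤ C) :
    ∫ z, W z ∂((ν.prod ν).prod (ν.prod ν))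
      = ∫ x, (∫ y, (∫ u, (∫ v, W ((x,y),(u,v)) ∂ν) ∂ν) ∂ν) ∂ν := by
  have hint : Integrable W ((ν.prod ν).prod (ν.prod ν)) :=
    intg hm.aestronglyMeasurable hC
  rw [integral_prod _ hint]
  have h1 : ∀ p : ℝ×ℝ, (∫ q, W (p, q) ∂(ν.prod ν))
      = ∫ u, (∫ v, W (p,(u,v)) ∂ν) ∂ν := by
    intro p
    refine integral_prod _ ?_
    exact intg (hm.comp measurable_prodMk_left).aestronglyMeasurable (fun q => hC (p, q))
  have h2 : Integrable (fun p => ∫ q, W (p, q) ∂(ν.prod ν)) (ν.prod ν) := by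
    refine intg (C := C * (((ν.prod ν)) Set.univ).toReal)
      (AEStronglyMeasurable.integral_prod_right' hm.aestronglyMeasurable) ?_
    intro p
    have : ‖∫ q, W (p, q) ∂(ν.prod ν)‖ ≤ C * (((ν.prod ν)) Set.univ).toReal :=
      norm_integral_le_of_norm_le_const
        (Filter.Eventually.of_forall (fun q => by simpa [Real.norm_eq_abs] using hC (p, q)))
    simpa [Real.norm_eq_abs] using this
  rw [integral_prod _ h2]
  refine integral_congr_ae (Filter.Eventually.of_forall (fun x => ?_))
  refine integral_congr_ae (Filter.Eventually.of_forall (fun y => ?_))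
  exact h1 (x, y)

lemma map_swapq :
    ((ν.prod ν).prod (ν.prod ν)).map (fun z : (ℝ×ℝ)×(ℝ×ℝ) => (z.1, Prod.swap z.2))
      = (ν.prod ν).prod (ν.prod ν) :=
  ((MeasurePreserving.id (ν.prod ν)).prod (Measure.measurePreserving_swap)).map_eq

lemma map_swapp :
    ((ν.prod ν).prod (ν.prod ν)).map (fun z : (ℝ×ℝ)×(ℝ×ℝ) => (Prod.swap z.1, z.2))
      = (ν.prod ν).prod (ν.prod ν) :=
  ((Measure.measurePreserving_swap).prod (MeasurePreserving.id (ν.prod ν))).map_eq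

lemma map_swappq :
    ((ν.prod ν).prod (ν.prod ν)).map (fun z : (ℝ×ℝ)×(ℝ×ℝ) => (z.2, z.1))
      = (ν.prod ν).prod (ν.prod ν) :=
  (Measure.measurePreserving_swap).map_eq

lemma mp_e2 :
    MeasurePreserving (fun z : (ℝ×ℝ)×(ℝ×ℝ) => ((z.1.1, z.2.1), (z.1.2, z.2.2)))
      ((ν.prod ν).prod (ν.prod ν)) ((ν.prod ν).prod (ν.prod ν)) := by
  have A0 := measurePreserving_prodAssoc ν ν (ν.prod ν)
  have B := ((measurePreserving_prodAssoc ν ν ν).symm MeasurableEquiv.prodAssoc)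
  have step2 := (MeasurePreserving.id ν).prod B
  have step3 := (MeasurePreserving.id ν).prod
    ((Measure.measurePreserving_swap (μ := ν) (ν := ν)).prod (MeasurePreserving.id ν))
  have step4 := (MeasurePreserving.id ν).prod (measurePreserving_prodAssoc ν ν ν)
  have A2' := (measurePreserving_prodAssoc ν ν (ν.prod ν)).symm MeasurableEquiv.prodAssoc
  have comp := A2'.comp (step4.comp (step3.comp (step2.comp A0)))
  convert comp using 1
  rfl

lemma map_e2 :
    ((ν.prod ν).prod (ν.prod ν)).map
        (fun z : (ℝ×ℝ)×(ℝ×ℝ) => ((z.1.1, z.2.1), (z.1.2, z.2.2)))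
      = (ν.prod ν).prod (ν.prod ν) :=
  (mp_e2 ν).map_eq

lemma map_e3 :
    ((ν.prod ν).prod (ν.prod ν)).map
        (fun z : (ℝ×ℝ)×(ℝ×ℝ) => ((z.1.1, z.2.2), (z.1.2, z.2.1)))
      = (ν.prod ν).prod (ν.prod ν) := by
  have h1 := (mp_e2 ν).comp
    ((MeasurePreserving.id (ν.prod ν)).prod (Measure.measurePreserving_swap (μ := ν) (ν := ν)))
  have h2 : MeasurePreserving (fun z : (ℝ×ℝ)×(ℝ×ℝ) => ((z.1.1, z.2.2), (z.1.2, z.2.1)))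
      ((ν.prod ν).prod (ν.prod ν)) ((ν.prod ν).prod (ν.prod ν)) := by
    convert h1 using 1
    rfl
  exact h2.map_eq

end Prod4

section Conv
variable {t : ℝ}

/-- convert a 4-fold integral over the cube with ordering-support into nested simplex form -/
lemma conv (W G : ℝ → ℝ → ℝ → ℝ → ℝ)
    (hsupp1 : ∀ x y u v, ¬ y ≤ x → W x y u v = 0)
    (hsupp2 : ∀ x y u v, ¬ u ≤ y → W x y u v = 0)
    (hsupp3 : ∀ x y u v, ¬ v ≤ u → W x y u v = 0)
    (heq : ∀ x y u v, x ∈ Set.Icc 0 t → y ∈ Set.Ioo 0 x → u ∈ Set.Ioo 0 y →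
      v ∈ Set.Ioo 0 u → W x y u v = G x y u v) :
    (∫ x in Set.Icc (0:ℝ) t, ∫ y in Set.Icc (0:ℝ) t, ∫ u in Set.Icc (0:ℝ) t,
        ∫ v in Set.Icc (0:ℝ) t, W x y u v)
      = ∫ x in Set.Icc (0:ℝ) t, ∫ y in Set.Icc (0:ℝ) x, ∫ u in Set.Icc (0:ℝ) y,
          ∫ v in Set.Icc (0:ℝ) u, G x y u v := by
  refine setIntegral_congr_fun measurableSet_Icc (fun x hx => ?_)
  have hy_sub : Set.Icc (0:ℝ) x ⊆ Set.Icc 0 t := Set.Icc_subset_Icc_right hx.2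
  rw [shrink measurableSet_Icc measurableSet_Icc hy_sub ?hzero]
  case hzero =>
    intro y hy hyx
    have hh : ¬ y ≤ x := fun h => hyx ⟨hy.1, h⟩
    have hw : ∀ u v : ℝ, W x y u v = 0 := fun u v => hsupp1 x y u v hh
    simp only [hw, integral_zero]
  have hy_step : ∀ y ∈ Set.Icc (0:ℝ) x,
      (∫ u in Set.Icc (0:ℝ) t, ∫ v in Set.Icc (0:ℝ) t, W x y u v)
        = ∫ u in Set.Icc (0:ℝ) y, ∫ v in Set.Icc (0:ℝ) u, W x y u v := by
    intro y hy
    have hu_sub : Set.Icc (0:ℝ) y ⊆ Set.Icc 0 t :=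
      Set.Icc_subset_Icc_right (le_trans hy.2 hx.2)
    rw [shrink measurableSet_Icc measurableSet_Icc hu_sub ?hz2]
    case hz2 =>
      intro u hu huy
      have hh : ¬ u ≤ y := fun h => huy ⟨hu.1, h⟩
      have hw : ∀ v : ℝ, W x y u v = 0 := fun v => hsupp2 x y u v hh
      simp only [hw, integral_zero]
    refine setIntegral_congr_fun measurableSet_Icc (fun u hu => ?_)
    have hv_sub : Set.Icc (0:ℝ) u ⊆ Set.Icc 0 t :=
      Set.Icc_subset_Icc_right (le_trans hu.2 (le_trans hy.2 hx.2))
    rw [shrink measurableSet_Icc measurableSet_Icc hv_sub ?hz3]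
    case hz3 =>
      intro v hv hvu
      exact hsupp3 x y u v (fun h => hvu ⟨hv.1, h⟩)
  rw [setIntegral_congr_fun measurableSet_Icc hy_step]
  rw [← setIntegral_congr_set (Ioo_ae_eq_Icc (μ := volume) (a := (0:ℝ)) (b := x)),
    ← setIntegral_congr_set (Ioo_ae_eq_Icc (μ := volume) (a := (0:ℝ)) (b := x)) (f := fun y =>
      ∫ u in Set.Icc (0:ℝ) y, ∫ v in Set.Icc (0:ℝ) u, G x y u v)]
  refine setIntegral_congr_fun measurableSet_Ioo (fun y hy => ?_)
  rw [← setIntegral_congr_set (Ioo_ae_eq_Icc (μ := volume) (a := (0:ℝ)) (b := y)),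
    ← setIntegral_congr_set (Ioo_ae_eq_Icc (μ := volume) (a := (0:ℝ)) (b := y)) (f := fun u =>
      ∫ v in Set.Icc (0:ℝ) u, G x y u v)]
  refine setIntegral_congr_fun measurableSet_Ioo (fun u hu => ?_)
  rw [← setIntegral_congr_set (Ioo_ae_eq_Icc (μ := volume) (a := (0:ℝ)) (b := u)),
    ← setIntegral_congr_set (Ioo_ae_eq_Icc (μ := volume) (a := (0:ℝ)) (b := u)) (f := fun v =>
      G x y u v)]
  refine setIntegral_congr_fun measurableSet_Ioo (fun v hv => ?_)
  exact heq x y u v hx hy hu hv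

/-- nested Icc integrals to nested interval integrals -/
lemma nest4 (ht0 : 0 ≤ t) (g : ℝ → ℝ → ℝ → ℝ → ℝ) :
    (∫ x in Set.Icc (0:ℝ) t, ∫ y in Set.Icc (0:ℝ) x, ∫ u in Set.Icc (0:ℝ) y,
        ∫ v in Set.Icc (0:ℝ) u, g x y u v)
      = ∫ x in (0:ℝ)..t, ∫ y in (0:ℝ)..x, ∫ u in (0:ℝ)..y, ∫ v in (0:ℝ)..u, g x y u v := by
  rw [intervalIntegral.integral_of_le ht0, ← integral_Icc_eq_integral_Ioc]
  refine setIntegral_congr_fun measurableSet_Icc (fun x hx => ?_)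
  rw [intervalIntegral.integral_of_le hx.1, ← integral_Icc_eq_integral_Ioc]
  refine setIntegral_congr_fun measurableSet_Icc (fun y hy => ?_)
  rw [intervalIntegral.integral_of_le hy.1, ← integral_Icc_eq_integral_Ioc]
  refine setIntegral_congr_fun measurableSet_Icc (fun u hu => ?_)
  rw [intervalIntegral.integral_of_le hu.1, ← integral_Icc_eq_integral_Ioc]

/-- pull a constant out of the nested integrals -/
lemma pull4 {t : ℝ} (r : ℝ) (g : ℝ → ℝ → ℝ → ℝ → ℝ) :
    (∫ x in Set.Icc (0:ℝ) t, ∫ y in Set.Icc (0:ℝ) x, ∫ u in Set.Icc (0:ℝ) y,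
        ∫ v in Set.Icc (0:ℝ) u, r * g x y u v)
      = r * ∫ x in Set.Icc (0:ℝ) t, ∫ y in Set.Icc (0:ℝ) x, ∫ u in Set.Icc (0:ℝ) y,
          ∫ v in Set.Icc (0:ℝ) u, g x y u v := by
  rw [← integral_const_mul]
  refine setIntegral_congr_fun measurableSet_Icc (fun x hx => ?_)
  rw [← integral_const_mul]
  refine setIntegral_congr_fun measurableSet_Icc (fun y hy => ?_)
  rw [← integral_const_mul]
  refine setIntegral_congr_fun measurableSet_Icc (fun u hu => ?_)
  rw [← integral_const_mul]

end Conv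

/-! ### The kernel products -/

noncomputable def Phi (T α t : ℝ) (x y u v : ℝ) : ℝ :=
  fker T α t x u * fker T α t y u * (fker T α t x v * fker T α t y v)

noncomputable def W0f (T α t : ℝ) (z : (ℝ×ℝ)×(ℝ×ℝ)) : ℝ :=
  Phi T α t z.1.1 z.1.2 z.2.1 z.2.2

noncomputable def W1f (T α t : ℝ) (z : (ℝ×ℝ)×(ℝ×ℝ)) : ℝ :=
  (if z.2.2 ≤ z.2.1 then (1:ℝ) else 0) * W0f T α t z

noncomputable def W2f (T α t : ℝ) (z : (ℝ×ℝ)×(ℝ×ℝ)) : ℝ :=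
  (if z.1.2 ≤ z.1.1 then (1:ℝ) else 0) * W1f T α t z

noncomputable def W3f (T α t : ℝ) (z : (ℝ×ℝ)×(ℝ×ℝ)) : ℝ :=
  (if z.2.1 ≤ z.1.1 then (1:ℝ) else 0) * W2f T α t z

noncomputable def N1f (T α t : ℝ) (z : (ℝ×ℝ)×(ℝ×ℝ)) : ℝ :=
  (if z.2.1 < z.1.2 then (1:ℝ) else 0) * W3f T α t z

noncomputable def N2f (T α t : ℝ) (z : (ℝ×ℝ)×(ℝ×ℝ)) : ℝ :=
  (if z.1.2 ≤ z.2.1 then (1:ℝ) else 0) * ((if z.2.2 < z.1.2 then (1:ℝ) else 0) * W3f T α t z)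

noncomputable def N4f (T α t : ℝ) (z : (ℝ×ℝ)×(ℝ×ℝ)) : ℝ :=
  (if z.1.2 ≤ z.2.1 then (1:ℝ) else 0) * ((if z.1.2 ≤ z.2.2 then (1:ℝ) else 0) * W3f T α t z)

section FK
variable {T α t : ℝ}

lemma fker_symm (a b : ℝ) : fker T α t a b = fker T α t b a := by
  unfold fker
  rw [max_comm, min_comm]
  exact if_congr and_comm rfl rfl

lemma fker_zero_left {a : ℝ} (ha : a ∉ Set.Icc (0:ℝ) t) (b : ℝ) : fker T α t a b = 0 := by
  unfold fker; rw [if_neg (fun h => ha h.1)]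

lemma fker_zero_right (a : ℝ) {b : ℝ} (hb : b ∉ Set.Icc (0:ℝ) t) : fker T α t a b = 0 := by
  unfold fker; rw [if_neg (fun h => hb h.2)]

lemma fker_eval {a b : ℝ} (ha : a ∈ Set.Icc (0:ℝ) t) (hb : b ∈ Set.Icc (0:ℝ) t)
    (hba : b ≤ a) :
    fker T α t a b
      = (1 / (2 * Real.sqrt (lam T α t))) * (T - a) ^ (α - 1) * (T - b) ^ (-α) := by
  unfold fker
  rw [if_pos ⟨ha, hb⟩, max_eq_left hba, min_eq_right hba]

lemma fker_meas : Measurable (Function.uncurry (fker T α t)) := by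
  unfold fker Function.uncurry
  refine Measurable.ite ?_ ?_ measurable_const
  · exact (measurable_fst (measurableSet_Icc)).inter (measurable_snd (measurableSet_Icc))
  · refine Measurable.mul ?_ ?_
    · refine Measurable.mul measurable_const ?_
      exact (measurable_const.sub (measurable_fst.max measurable_snd)).pow measurable_const
    · exact (measurable_const.sub (measurable_fst.min measurable_snd)).pow measurable_const

lemma fker_bound (htT : t < T) : ∃ C : ℝ, 0 ≤ C ∧ ∀ a b : ℝ, |fker T α t a b| ≤ C := by
  have hcomp : IsCompact (Set.Icc (0:ℝ) t ×ˢ Set.Icc (0:ℝ) t) :=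
    isCompact_Icc.prod isCompact_Icc
  have hcont : ContinuousOn
      (fun p : ℝ × ℝ => (1 / (2 * Real.sqrt (lam T α t))) * (T - max p.1 p.2) ^ (α - 1)
        * (T - min p.1 p.2) ^ (-α)) (Set.Icc (0:ℝ) t ×ˢ Set.Icc (0:ℝ) t) := by
    intro p hp
    have h1 : p.1 ≤ t := hp.1.2
    have h2 : p.2 ≤ t := hp.2.2
    have hmax : (0:ℝ) < T - max p.1 p.2 := by
      simp only [sub_pos]; exact lt_of_le_of_lt (max_le h1 h2) htT
    have hmin : (0:ℝ) < T - min p.1 p.2 := by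
      simp only [sub_pos]; exact lt_of_le_of_lt (le_trans (min_le_left _ _) h1) htT
    refine ContinuousWithinAt.mul (ContinuousWithinAt.mul continuousWithinAt_const ?_) ?_
    · refine ContinuousAt.continuousWithinAt ?_
      exact ContinuousAt.rpow_const
        (continuous_const.sub (continuous_fst.max continuous_snd)).continuousAt
        (Or.inl (ne_of_gt hmax))
    · refine ContinuousAt.continuousWithinAt ?_
      exact ContinuousAt.rpow_const
        (continuous_const.sub (continuous_fst.min continuous_snd)).continuousAt
        (Or.inl (ne_of_gt hmin))
  obtain ⟨C, hC⟩ := hcomp.exists_bound_of_continuousOn hcont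
  refine ⟨max C 0, le_max_right _ _, fun a b => ?_⟩
  unfold fker
  by_cases h : a ∈ Set.Icc (0:ℝ) t ∧ b ∈ Set.Icc (0:ℝ) t
  · rw [if_pos h]
    have := hC (a, b) (Set.mk_mem_prod h.1 h.2)
    simp only [Real.norm_eq_abs] at this
    exact le_trans this (le_max_left _ _)
  · rw [if_neg h]; simp

lemma Phi_swap_uv (x y u v : ℝ) : Phi T α t x y v u = Phi T α t x y u v := by
  unfold Phi; ring

lemma Phi_swap_xy (x y u v : ℝ) : Phi T α t y x u v = Phi T α t x y u v := by
  unfold Phi; ring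

lemma Phi_swap_pq (x y u v : ℝ) : Phi T α t u v x y = Phi T α t x y u v := by
  unfold Phi
  rw [fker_symm u x, fker_symm v x, fker_symm u y, fker_symm v y]
  ring

lemma Phi_meas4 {Z : Type*} [MeasurableSpace Z] {f g h k : Z → ℝ}
    (hf : Measurable f) (hg : Measurable g) (hh : Measurable h) (hk : Measurable k) :
    Measurable (fun z => Phi T α t (f z) (g z) (h z) (k z)) := by
  unfold Phi
  have m : ∀ {p q : Z → ℝ}, Measurable p → Measurable q →
      Measurable (fun z => fker T α t (p z) (q z)) :=
    fun hp hq => fker_meas.comp (hp.prodMk hq)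
  exact ((m hf hh).mul (m hg hh)).mul ((m hf hk).mul (m hg hk))

lemma Phi_bound {C : ℝ} (hC0 : 0 ≤ C) (hC : ∀ a b : ℝ, |fker T α t a b| ≤ C)
    (x y u v : ℝ) : |Phi T α t x y u v| ≤ C * C * (C * C) := by
  unfold Phi
  rw [abs_mul, abs_mul, abs_mul]
  have h2 : ∀ a b c d : ℝ, |fker T α t a b| * |fker T α t c d| ≤ C * C := fun a b c d =>
    mul_le_mul (hC a b) (hC c d) (abs_nonneg _) hC0
  exact mul_le_mul (h2 _ _ _ _) (h2 _ _ _ _)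
    (mul_nonneg (abs_nonneg _) (abs_nonneg _)) (mul_nonneg hC0 hC0)

-- measurability of the product-space integrands
lemma mX : Measurable (fun z : (ℝ×ℝ)×(ℝ×ℝ) => z.1.1) := measurable_fst.fst
lemma mY : Measurable (fun z : (ℝ×ℝ)×(ℝ×ℝ) => z.1.2) := measurable_fst.snd
lemma mU : Measurable (fun z : (ℝ×ℝ)×(ℝ×ℝ) => z.2.1) := measurable_snd.fst
lemma mV : Measurable (fun z : (ℝ×ℝ)×(ℝ×ℝ) => z.2.2) := measurable_snd.snd

lemma W0f_meas : Measurable (W0f T α t) := Phi_meas4 mX mY mU mV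

lemma W1f_meas : Measurable (W1f T α t) :=
  (Measurable.ite (measurableSet_le mV mU) measurable_const measurable_const).mul W0f_meas

lemma W2f_meas : Measurable (W2f T α t) :=
  (Measurable.ite (measurableSet_le mY mX) measurable_const measurable_const).mul W1f_meas

lemma W3f_meas : Measurable (W3f T α t) :=
  (Measurable.ite (measurableSet_le mU mX) measurable_const measurable_const).mul W2f_meas

lemma N1f_meas : Measurable (N1f T α t) :=
  (Measurable.ite (measurableSet_lt mU mY) measurable_const measurable_const).mul W3f_meas

lemma N2f_meas : Measurable (N2f T α t) :=
  (Measurable.ite (measurableSet_le mY mU) measurable_const measurable_const).mul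
    ((Measurable.ite (measurableSet_lt mV mY) measurable_const measurable_const).mul W3f_meas)

lemma N4f_meas : Measurable (N4f T α t) :=
  (Measurable.ite (measurableSet_le mY mU) measurable_const measurable_const).mul
    ((Measurable.ite (measurableSet_le mY mV) measurable_const measurable_const).mul W3f_meas)

variable {C : ℝ}

lemma W0f_bound (hC0 : 0 ≤ C) (hC : ∀ a b : ℝ, |fker T α t a b| ≤ C) (z : (ℝ×ℝ)×(ℝ×ℝ)) :
    |W0f T α t z| ≤ C * C * (C * C) := Phi_bound hC0 hC _ _ _ _

lemma W1f_bound (hC0 : 0 ≤ C) (hC : ∀ a b : ℝ, |fker T α t a b| ≤ C) (z : (ℝ×ℝ)×(ℝ×ℝ)) :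
    |W1f T α t z| ≤ C * C * (C * C) :=
  le_trans (ite_mul_abs_le _ _) (W0f_bound hC0 hC z)

lemma W2f_bound (hC0 : 0 ≤ C) (hC : ∀ a b : ℝ, |fker T α t a b| ≤ C) (z : (ℝ×ℝ)×(ℝ×ℝ)) :
    |W2f T α t z| ≤ C * C * (C * C) :=
  le_trans (ite_mul_abs_le _ _) (W1f_bound hC0 hC z)

lemma W3f_bound (hC0 : 0 ≤ C) (hC : ∀ a b : ℝ, |fker T α t a b| ≤ C) (z : (ℝ×ℝ)×(ℝ×ℝ)) :
    |W3f T α t z| ≤ C * C * (C * C) :=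
  le_trans (ite_mul_abs_le _ _) (W2f_bound hC0 hC z)

lemma N1f_bound (hC0 : 0 ≤ C) (hC : ∀ a b : ℝ, |fker T α t a b| ≤ C) (z : (ℝ×ℝ)×(ℝ×ℝ)) :
    |N1f T α t z| ≤ C * C * (C * C) :=
  le_trans (ite_mul_abs_le _ _) (W3f_bound hC0 hC z)

lemma N2f_bound (hC0 : 0 ≤ C) (hC : ∀ a b : ℝ, |fker T α t a b| ≤ C) (z : (ℝ×ℝ)×(ℝ×ℝ)) :
    |N2f T α t z| ≤ C * C * (C * C) :=
  le_trans (ite_mul_abs_le _ _) (le_trans (ite_mul_abs_le _ _) (W3f_bound hC0 hC z))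

lemma N4f_bound (hC0 : 0 ≤ C) (hC : ∀ a b : ℝ, |fker T α t a b| ≤ C) (z : (ℝ×ℝ)×(ℝ×ℝ)) :
    |N4f T α t z| ≤ C * C * (C * C) :=
  le_trans (ite_mul_abs_le _ _) (le_trans (ite_mul_abs_le _ _) (W3f_bound hC0 hC z))

end FK

lemma S0 (T α t : ℝ) (htT : t ≤ T) :
    normSq T (contr T (fker T α t) (fker T α t))
      = ∫ x in Set.Icc (0:ℝ) t, ∫ y in Set.Icc (0:ℝ) t, ∫ u in Set.Icc (0:ℝ) t,
          ∫ v in Set.Icc (0:ℝ) t, Phi T α t x y u v := by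
  have hIsub : Set.Icc (0:ℝ) t ⊆ Set.Icc (0:ℝ) T := Set.Icc_subset_Icc_right htT
  unfold normSq ip contr
  have hg : ∀ x y : ℝ, (∫ w in Set.Icc (0:ℝ) T, fker T α t x w * fker T α t y w)
      = ∫ w in Set.Icc (0:ℝ) t, fker T α t x w * fker T α t y w := by
    intro x y
    refine shrink measurableSet_Icc measurableSet_Icc hIsub (fun w _ hw => ?_)
    rw [fker_zero_right x hw, zero_mul]
  simp only [hg]
  rw [shrink measurableSet_Icc measurableSet_Icc hIsub ?hx0]
  case hx0 =>
    intro x _ hx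
    have h1 : ∀ y w : ℝ, fker T α t x w * fker T α t y w = 0 := by
      intro y w; rw [fker_zero_left hx, zero_mul]
    simp only [h1, integral_zero, zero_mul, integral_const, smul_zero]
  refine setIntegral_congr_fun measurableSet_Icc (fun x hx => ?_)
  rw [shrink measurableSet_Icc measurableSet_Icc hIsub ?hy0]
  case hy0 =>
    intro y _ hy
    have h1 : ∀ w : ℝ, fker T α t x w * fker T α t y w = 0 := by
      intro w; rw [fker_zero_left hy, mul_zero]
    simp only [h1, integral_zero, zero_mul]
  refine setIntegral_congr_fun measurableSet_Icc (fun y hy => ?_)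
  rw [← integral_mul_const]
  refine setIntegral_congr_fun measurableSet_Icc (fun u hu => ?_)
  rw [← integral_const_mul]
  rfl

theorem stmt_6 (T α : ℝ) (hT : 0 < T) (hα : 1 / 2 < α)
    (t : ℝ) (ht1 : max 0 (T - 1 / Real.exp 1) < t) (ht2 : t < T) :
    normSq T (contr T (fker T α t) (fker T α t)) = A1 T α t + A2 T α t := by
  classical
  -- basic numeric facts
  have h0t : 0 < t := lt_of_le_of_lt (le_max_left _ _) ht1
  have hst : 0 < T - t := sub_pos.2 ht2
  have hlt1 : T - t < 1 := by
    have h1 : T - 1 / Real.exp 1 < t := lt_of_le_of_lt (le_max_right _ _) ht1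
    have h2 : (0:ℝ) < Real.exp 1 := Real.exp_pos 1
    have h3 : 1 / Real.exp 1 < 1 := by
      rw [div_lt_one h2]
      have := Real.exp_one_gt_d9
      linarith
    linarith
  have hlam : 0 < lam T α t := by
    unfold lam
    apply div_pos
    · exact abs_pos.2 (ne_of_lt (Real.log_neg hst hlt1))
    · linarith
  obtain ⟨C, hC0, hCb⟩ := fker_bound (T := T) (α := α) (t := t) ht2
  haveI hfin : IsFiniteMeasure (volume.restrict (Set.Icc (0:ℝ) t)) := by
    constructor
    rw [Measure.restrict_apply_univ, Real.volume_Icc]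
    exact ENNReal.ofReal_lt_top
  -- abbreviations (all spelled out)
  -- null sets
  have hnull_q : ((volume.restrict (Set.Icc (0:ℝ) t)).prod
        (volume.restrict (Set.Icc (0:ℝ) t))).prod
      ((volume.restrict (Set.Icc (0:ℝ) t)).prod (volume.restrict (Set.Icc (0:ℝ) t)))
      {z : (ℝ×ℝ)×(ℝ×ℝ) | z.2.2 = z.2.1} = 0 := by
    have hset : {z : (ℝ×ℝ)×(ℝ×ℝ) | z.2.2 = z.2.1}
        = (Set.univ : Set (ℝ×ℝ)) ×ˢ {p : ℝ×ℝ | p.1 = p.2} := by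
      ext z; simp [eq_comm]
    rw [hset, Measure.prod_prod, diag_null, mul_zero]
  have hnull_p : ((volume.restrict (Set.Icc (0:ℝ) t)).prod
        (volume.restrict (Set.Icc (0:ℝ) t))).prod
      ((volume.restrict (Set.Icc (0:ℝ) t)).prod (volume.restrict (Set.Icc (0:ℝ) t)))
      {z : (ℝ×ℝ)×(ℝ×ℝ) | z.1.2 = z.1.1} = 0 := by
    have hset : {z : (ℝ×ℝ)×(ℝ×ℝ) | z.1.2 = z.1.1}
        = {p : ℝ×ℝ | p.1 = p.2} ×ˢ (Set.univ : Set (ℝ×ℝ)) := by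
      ext z; simp [eq_comm]
    rw [hset, Measure.prod_prod, diag_null, zero_mul]
  have hnull_xu : ((volume.restrict (Set.Icc (0:ℝ) t)).prod
        (volume.restrict (Set.Icc (0:ℝ) t))).prod
      ((volume.restrict (Set.Icc (0:ℝ) t)).prod (volume.restrict (Set.Icc (0:ℝ) t)))
      {z : (ℝ×ℝ)×(ℝ×ℝ) | z.2.1 = z.1.1} = 0 := by
    have hm : MeasurableSet {z : (ℝ×ℝ)×(ℝ×ℝ) | z.2.1 = z.1.1} :=
      measurableSet_eq_fun mU mX
    rw [Measure.prod_apply hm]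
    have h : ∀ p : ℝ×ℝ, ((volume.restrict (Set.Icc (0:ℝ) t)).prod
        (volume.restrict (Set.Icc (0:ℝ) t)))
        (Prod.mk p ⁻¹' {z : (ℝ×ℝ)×(ℝ×ℝ) | z.2.1 = z.1.1}) = 0 := by
      intro p
      have hq : (Prod.mk p ⁻¹' {z : (ℝ×ℝ)×(ℝ×ℝ) | z.2.1 = z.1.1})
          = ({p.1} : Set ℝ) ×ˢ (Set.univ : Set ℝ) := by
        ext q
        simp only [Set.mem_preimage, Set.mem_setOf_eq, Set.mem_prod, Set.mem_singleton_iff,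
          Set.mem_univ, and_true]
      rw [hq, Measure.prod_prod, measure_singleton, zero_mul]
    rw [lintegral_congr h, lintegral_zero]
  -- step 0 : into the product space
  have key : normSq T (contr T (fker T α t) (fker T α t))
      = ∫ z, W0f T α t z ∂(((volume.restrict (Set.Icc (0:ℝ) t)).prod
          (volume.restrict (Set.Icc (0:ℝ) t))).prod
        ((volume.restrict (Set.Icc (0:ℝ) t)).prod (volume.restrict (Set.Icc (0:ℝ) t)))) := by
    rw [S0 T α t ht2.le,
      iter_eq_prod4 (volume.restrict (Set.Icc (0:ℝ) t)) (W0f T α t) W0f_meas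
        (W0f_bound hC0 hCb)]
    rfl
  -- step 1 : symmetrize in (u,v)
  have s1 : (∫ z, W0f T α t z ∂(((volume.restrict (Set.Icc (0:ℝ) t)).prod
          (volume.restrict (Set.Icc (0:ℝ) t))).prod
        ((volume.restrict (Set.Icc (0:ℝ) t)).prod (volume.restrict (Set.Icc (0:ℝ) t)))))
      = 2 * ∫ z, W1f T α t z ∂(((volume.restrict (Set.Icc (0:ℝ) t)).prod
          (volume.restrict (Set.Icc (0:ℝ) t))).prod
        ((volume.restrict (Set.Icc (0:ℝ) t)).prod (volume.restrict (Set.Icc (0:ℝ) t)))) := by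
    refine split2 W0f_meas (W0f_bound hC0 hCb) mU mV
      (e := fun z : (ℝ×ℝ)×(ℝ×ℝ) => (z.1, Prod.swap z.2))
      (measurable_fst.prodMk (mV.prodMk mU))
      (map_swapq (volume.restrict (Set.Icc (0:ℝ) t)))
      (fun z => Phi_swap_uv _ _ _ _) (fun z => rfl) (fun z => rfl) hnull_q
  -- step 2 : symmetrize in (x,y)
  have s2 : (∫ z, W1f T α t z ∂(((volume.restrict (Set.Icc (0:ℝ) t)).prod
          (volume.restrict (Set.Icc (0:ℝ) t))).prod
        ((volume.restrict (Set.Icc (0:ℝ) t)).prod (volume.restrict (Set.Icc (0:ℝ) t)))))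
      = 2 * ∫ z, W2f T α t z ∂(((volume.restrict (Set.Icc (0:ℝ) t)).prod
          (volume.restrict (Set.Icc (0:ℝ) t))).prod
        ((volume.restrict (Set.Icc (0:ℝ) t)).prod (volume.restrict (Set.Icc (0:ℝ) t)))) := by
    refine split2 W1f_meas (W1f_bound hC0 hCb) mX mY
      (e := fun z : (ℝ×ℝ)×(ℝ×ℝ) => (Prod.swap z.1, z.2))
      ((mY.prodMk mX).prodMk measurable_snd)
      (map_swapp (volume.restrict (Set.Icc (0:ℝ) t)))
      (fun z => ?_) (fun z => rfl) (fun z => rfl) hnull_p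
    show (if z.2.2 ≤ z.2.1 then (1:ℝ) else 0) * W0f T α t (Prod.swap z.1, z.2)
      = W1f T α t z
    rw [show W0f T α t (Prod.swap z.1, z.2) = W0f T α t z from Phi_swap_xy _ _ _ _]
    rfl
  -- step 3 : symmetrize between the two pairs
  have s3 : (∫ z, W2f T α t z ∂(((volume.restrict (Set.Icc (0:ℝ) t)).prod
          (volume.restrict (Set.Icc (0:ℝ) t))).prod
        ((volume.restrict (Set.Icc (0:ℝ) t)).prod (volume.restrict (Set.Icc (0:ℝ) t)))))
      = 2 * ∫ z, W3f T α t z ∂(((volume.restrict (Set.Icc (0:ℝ) t)).prod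
          (volume.restrict (Set.Icc (0:ℝ) t))).prod
        ((volume.restrict (Set.Icc (0:ℝ) t)).prod (volume.restrict (Set.Icc (0:ℝ) t)))) := by
    refine split2 W2f_meas (W2f_bound hC0 hCb) mX mU
      (e := fun z : (ℝ×ℝ)×(ℝ×ℝ) => (z.2, z.1))
      (measurable_snd.prodMk measurable_fst)
      (map_swappq (volume.restrict (Set.Icc (0:ℝ) t)))
      (fun z => ?_) (fun z => rfl) (fun z => rfl) hnull_xu
    show (if z.2.2 ≤ z.2.1 then (1:ℝ) else 0)
        * ((if z.1.2 ≤ z.1.1 then (1:ℝ) else 0) * W0f T α t (z.2, z.1))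
      = W2f T α t z
    rw [show W0f T α t (z.2, z.1) = W0f T α t z from Phi_swap_pq _ _ _ _]
    show _ = (if z.1.2 ≤ z.1.1 then (1:ℝ) else 0)
        * ((if z.2.2 ≤ z.2.1 then (1:ℝ) else 0) * W0f T α t z)
    ring
  -- integrability of the pieces
  have intN1 : Integrable (N1f T α t) (((volume.restrict (Set.Icc (0:ℝ) t)).prod
          (volume.restrict (Set.Icc (0:ℝ) t))).prod
        ((volume.restrict (Set.Icc (0:ℝ) t)).prod (volume.restrict (Set.Icc (0:ℝ) t)))) :=
    intg N1f_meas.aestronglyMeasurable (N1f_bound hC0 hCb)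
  have intN2 : Integrable (N2f T α t) (((volume.restrict (Set.Icc (0:ℝ) t)).prod
          (volume.restrict (Set.Icc (0:ℝ) t))).prod
        ((volume.restrict (Set.Icc (0:ℝ) t)).prod (volume.restrict (Set.Icc (0:ℝ) t)))) :=
    intg N2f_meas.aestronglyMeasurable (N2f_bound hC0 hCb)
  have intN4 : Integrable (N4f T α t) (((volume.restrict (Set.Icc (0:ℝ) t)).prod
          (volume.restrict (Set.Icc (0:ℝ) t))).prod
        ((volume.restrict (Set.Icc (0:ℝ) t)).prod (volume.restrict (Set.Icc (0:ℝ) t)))) :=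
    intg N4f_meas.aestronglyMeasurable (N4f_bound hC0 hCb)
  -- step 4 : decompose W3f
  have s4 : (∫ z, W3f T α t z ∂(((volume.restrict (Set.Icc (0:ℝ) t)).prod
          (volume.restrict (Set.Icc (0:ℝ) t))).prod
        ((volume.restrict (Set.Icc (0:ℝ) t)).prod (volume.restrict (Set.Icc (0:ℝ) t)))))
      = (∫ z, N1f T α t z ∂(((volume.restrict (Set.Icc (0:ℝ) t)).prod
          (volume.restrict (Set.Icc (0:ℝ) t))).prod
        ((volume.restrict (Set.Icc (0:ℝ) t)).prod (volume.restrict (Set.Icc (0:ℝ) t)))))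
      + ((∫ z, N2f T α t z ∂(((volume.restrict (Set.Icc (0:ℝ) t)).prod
          (volume.restrict (Set.Icc (0:ℝ) t))).prod
        ((volume.restrict (Set.Icc (0:ℝ) t)).prod (volume.restrict (Set.Icc (0:ℝ) t)))))
      + (∫ z, N4f T α t z ∂(((volume.restrict (Set.Icc (0:ℝ) t)).prod
          (volume.restrict (Set.Icc (0:ℝ) t))).prod
        ((volume.restrict (Set.Icc (0:ℝ) t)).prod (volume.restrict (Set.Icc (0:ℝ) t)))))) := by
    have hpt : ∀ z : (ℝ×ℝ)×(ℝ×ℝ),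
        W3f T α t z = N1f T α t z + (N2f T α t z + N4f T α t z) := by
      intro z
      unfold N1f N2f N4f
      by_cases h1 : z.2.1 < z.1.2
      · have h2 : ¬ z.1.2 ≤ z.2.1 := not_le.2 h1
        simp [h1, h2]
      · have h2 : z.1.2 ≤ z.2.1 := not_lt.1 h1
        by_cases h3 : z.2.2 < z.1.2
        · have h4 : ¬ z.1.2 ≤ z.2.2 := not_le.2 h3
          simp [h1, h2, h3, h4]
        · have h4 : z.1.2 ≤ z.2.2 := not_lt.1 h3
          simp [h1, h2, h3, h4]
    rw [integral_congr_ae (Filter.Eventually.of_forall hpt),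
      integral_add (g := fun z => N2f T α t z + N4f T α t z) intN1 (intN2.add intN4),
      integral_add intN2 intN4]
  -- rpow merging lemmas
  have hm1 : ∀ A : ℝ, 0 < A → A ^ (2*α-2) = A ^ (α-1) * A ^ (α-1) := by
    intro A hA
    rw [← Real.rpow_add hA]
    congr 1
    ring
  have hm2 : ∀ A : ℝ, 0 < A → A ^ (-(2*α)) = A ^ (-α) * A ^ (-α) := by
    intro A hA
    rw [← Real.rpow_add hA]
    congr 1
    ring
  have hm3 : ∀ A : ℝ, 0 < A → A ^ (-1:ℝ) = A ^ (-α) * A ^ (α-1) := by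
    intro A hA
    rw [← Real.rpow_add hA]
    congr 1
    ring
  -- endgame for N1
  have end1 : (∫ z, N1f T α t z ∂(((volume.restrict (Set.Icc (0:ℝ) t)).prod
          (volume.restrict (Set.Icc (0:ℝ) t))).prod
        ((volume.restrict (Set.Icc (0:ℝ) t)).prod (volume.restrict (Set.Icc (0:ℝ) t)))))
      = (1/(2*Real.sqrt (lam T α t)))^4
        * ∫ x in (0:ℝ)..t, ∫ y in (0:ℝ)..x, ∫ u in (0:ℝ)..y, ∫ v in (0:ℝ)..u,
            (T - x) ^ (2*α-2) * (T - y) ^ (2*α-2) * (T - u) ^ (-(2*α))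
              * (T - v) ^ (-(2*α)) := by
    rw [iter_eq_prod4 (volume.restrict (Set.Icc (0:ℝ) t)) (N1f T α t) N1f_meas
      (N1f_bound hC0 hCb)]
    rw [conv (t := t) (fun x y u v => N1f T α t ((x,y),(u,v)))
      (fun x y u v => (1/(2*Real.sqrt (lam T α t)))^4
        * ((T - x) ^ (2*α-2) * (T - y) ^ (2*α-2) * (T - u) ^ (-(2*α))
            * (T - v) ^ (-(2*α)))) ?hs1 ?hs2 ?hs3 ?heq]
    case hs1 =>
      intro x y u v h
      simp only [N1f, W3f, W2f, W1f]
      rw [if_neg h]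
      ring
    case hs2 =>
      intro x y u v h
      have h2 : ¬ u < y := fun hlt => h (le_of_lt hlt)
      simp only [N1f, W3f, W2f, W1f]
      rw [if_neg h2]
      ring
    case hs3 =>
      intro x y u v h
      simp only [N1f, W3f, W2f, W1f]
      rw [if_neg h]
      ring
    case heq =>
      intro x y u v hx hy hu hv
      have hyI : y ∈ Set.Icc (0:ℝ) t := ⟨hy.1.le, le_trans hy.2.le hx.2⟩
      have huI : u ∈ Set.Icc (0:ℝ) t := ⟨hu.1.le, le_trans hu.2.le hyI.2⟩
      have hvI : v ∈ Set.Icc (0:ℝ) t := ⟨hv.1.le, le_trans hv.2.le huI.2⟩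
      have hyx : y ≤ x := hy.2.le
      have huy : u < y := hu.2
      have hvu : v ≤ u := hv.2.le
      have hux : u ≤ x := le_trans huy.le hyx
      have hvy : v ≤ y := le_trans hvu huy.le
      have hvx : v ≤ x := le_trans hvy hyx
      have hpx : (0:ℝ) < T - x := sub_pos.2 (lt_of_le_of_lt hx.2 ht2)
      have hpy : (0:ℝ) < T - y := sub_pos.2 (lt_of_le_of_lt hyI.2 ht2)
      have hpu : (0:ℝ) < T - u := sub_pos.2 (lt_of_le_of_lt huI.2 ht2)
      have hpv : (0:ℝ) < T - v := sub_pos.2 (lt_of_le_of_lt hvI.2 ht2)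
      simp only [N1f, W3f, W2f, W1f, W0f, Phi]
      rw [if_pos huy, if_pos hux, if_pos hyx, if_pos hvu]
      rw [fker_eval hx huI hux, fker_eval hyI huI huy.le, fker_eval hx hvI hvx,
        fker_eval hyI hvI hvy]
      rw [hm1 (T - x) hpx, hm1 (T - y) hpy, hm2 (T - u) hpu, hm2 (T - v) hpv]
      ring
    rw [pull4, nest4 h0t.le]
  -- endgame for N2
  have end2 : (∫ z, N2f T α t z ∂(((volume.restrict (Set.Icc (0:ℝ) t)).prod
          (volume.restrict (Set.Icc (0:ℝ) t))).prod
        ((volume.restrict (Set.Icc (0:ℝ) t)).prod (volume.restrict (Set.Icc (0:ℝ) t)))))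
      = (1/(2*Real.sqrt (lam T α t)))^4
        * ∫ x in (0:ℝ)..t, ∫ y in (0:ℝ)..x, ∫ u in (0:ℝ)..y, ∫ v in (0:ℝ)..u,
            (T - x) ^ (2*α-2) * (T - y) ^ (-1:ℝ) * (T - u) ^ (-1:ℝ)
              * (T - v) ^ (-(2*α)) := by
    rw [integral_perm ((mX.prodMk mU).prodMk (mY.prodMk mV))
      (map_e2 (volume.restrict (Set.Icc (0:ℝ) t))) N2f_meas.aestronglyMeasurable]
    rw [show (∫ z : (ℝ×ℝ)×(ℝ×ℝ), N2f T α t ((z.1.1, z.2.1), (z.1.2, z.2.2))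
          ∂(((volume.restrict (Set.Icc (0:ℝ) t)).prod
          (volume.restrict (Set.Icc (0:ℝ) t))).prod
        ((volume.restrict (Set.Icc (0:ℝ) t)).prod (volume.restrict (Set.Icc (0:ℝ) t)))))
        = ∫ x in Set.Icc (0:ℝ) t, ∫ y in Set.Icc (0:ℝ) t, ∫ u in Set.Icc (0:ℝ) t,
            ∫ v in Set.Icc (0:ℝ) t, N2f T α t ((x,u),(y,v)) from
      iter_eq_prod4 (volume.restrict (Set.Icc (0:ℝ) t))
        (fun z => N2f T α t ((z.1.1, z.2.1), (z.1.2, z.2.2)))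
        (N2f_meas.comp ((mX.prodMk mU).prodMk (mY.prodMk mV)))
        (C := C*C*(C*C)) (fun z => N2f_bound hC0 hCb _)]
    rw [conv (t := t) (fun x y u v => N2f T α t ((x,u),(y,v)))
      (fun x y u v => (1/(2*Real.sqrt (lam T α t)))^4
        * ((T - x) ^ (2*α-2) * (T - y) ^ (-1:ℝ) * (T - u) ^ (-1:ℝ)
            * (T - v) ^ (-(2*α)))) ?hs1 ?hs2 ?hs3 ?heq]
    case hs1 =>
      intro x y u v h
      simp only [N2f, W3f, W2f, W1f]
      rw [if_neg h]
      ring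
    case hs2 =>
      intro x y u v h
      simp only [N2f, W3f, W2f, W1f]
      rw [if_neg h]
      ring
    case hs3 =>
      intro x y u v h
      have h2 : ¬ v < u := fun hlt => h (le_of_lt hlt)
      simp only [N2f, W3f, W2f, W1f]
      rw [if_neg h2]
      ring
    case heq =>
      intro x y u v hx hy hu hv
      have hyI : y ∈ Set.Icc (0:ℝ) t := ⟨hy.1.le, le_trans hy.2.le hx.2⟩
      have huI : u ∈ Set.Icc (0:ℝ) t := ⟨hu.1.le, le_trans hu.2.le hyI.2⟩
      have hvI : v ∈ Set.Icc (0:ℝ) t := ⟨hv.1.le, le_trans hv.2.le huI.2⟩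
      have hyx : y ≤ x := hy.2.le
      have huy : u ≤ y := hu.2.le
      have hvu : v < u := hv.2
      have hux : u ≤ x := le_trans huy hyx
      have hvy : v ≤ y := le_trans hvu.le huy
      have hvx : v ≤ x := le_trans hvy hyx
      have hpx : (0:ℝ) < T - x := sub_pos.2 (lt_of_le_of_lt hx.2 ht2)
      have hpy : (0:ℝ) < T - y := sub_pos.2 (lt_of_le_of_lt hyI.2 ht2)
      have hpu : (0:ℝ) < T - u := sub_pos.2 (lt_of_le_of_lt huI.2 ht2)
      have hpv : (0:ℝ) < T - v := sub_pos.2 (lt_of_le_of_lt hvI.2 ht2)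
      simp only [N2f, W3f, W2f, W1f, W0f, Phi]
      rw [if_pos huy, if_pos hvu, if_pos hyx, if_pos hux, if_pos hvy]
      rw [show fker T α t u y
          = (1 / (2 * Real.sqrt (lam T α t))) * (T - y) ^ (α - 1) * (T - u) ^ (-α) from
        (fker_symm u y).trans (fker_eval hyI huI huy)]
      rw [fker_eval hx hyI hyx, fker_eval hx hvI hvx, fker_eval huI hvI hvu.le]
      rw [hm1 (T - x) hpx, hm3 (T - y) hpy, hm3 (T - u) hpu, hm2 (T - v) hpv]
      ring
    rw [pull4, nest4 h0t.le]
  -- endgame for N4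
  have end4 : (∫ z, N4f T α t z ∂(((volume.restrict (Set.Icc (0:ℝ) t)).prod
          (volume.restrict (Set.Icc (0:ℝ) t))).prod
        ((volume.restrict (Set.Icc (0:ℝ) t)).prod (volume.restrict (Set.Icc (0:ℝ) t)))))
      = (1/(2*Real.sqrt (lam T α t)))^4
        * ∫ x in (0:ℝ)..t, ∫ y in (0:ℝ)..x, ∫ u in (0:ℝ)..y, ∫ v in (0:ℝ)..u,
            (T - x) ^ (2*α-2) * (T - y) ^ (-1:ℝ) * (T - u) ^ (-1:ℝ)
              * (T - v) ^ (-(2*α)) := by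
    rw [integral_perm ((mX.prodMk mV).prodMk (mY.prodMk mU))
      (map_e3 (volume.restrict (Set.Icc (0:ℝ) t))) N4f_meas.aestronglyMeasurable]
    rw [show (∫ z : (ℝ×ℝ)×(ℝ×ℝ), N4f T α t ((z.1.1, z.2.2), (z.1.2, z.2.1))
          ∂(((volume.restrict (Set.Icc (0:ℝ) t)).prod
          (volume.restrict (Set.Icc (0:ℝ) t))).prod
        ((volume.restrict (Set.Icc (0:ℝ) t)).prod (volume.restrict (Set.Icc (0:ℝ) t)))))
        = ∫ x in Set.Icc (0:ℝ) t, ∫ y in Set.Icc (0:ℝ) t, ∫ u in Set.Icc (0:ℝ) t,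
            ∫ v in Set.Icc (0:ℝ) t, N4f T α t ((x,v),(y,u)) from
      iter_eq_prod4 (volume.restrict (Set.Icc (0:ℝ) t))
        (fun z => N4f T α t ((z.1.1, z.2.2), (z.1.2, z.2.1)))
        (N4f_meas.comp ((mX.prodMk mV).prodMk (mY.prodMk mU)))
        (C := C*C*(C*C)) (fun z => N4f_bound hC0 hCb _)]
    rw [conv (t := t) (fun x y u v => N4f T α t ((x,v),(y,u)))
      (fun x y u v => (1/(2*Real.sqrt (lam T α t)))^4
        * ((T - x) ^ (2*α-2) * (T - y) ^ (-1:ℝ) * (T - u) ^ (-1:ℝ)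
            * (T - v) ^ (-(2*α)))) ?hs1 ?hs2 ?hs3 ?heq]
    case hs1 =>
      intro x y u v h
      simp only [N4f, W3f, W2f, W1f]
      rw [if_neg h]
      ring
    case hs2 =>
      intro x y u v h
      simp only [N4f, W3f, W2f, W1f]
      rw [if_neg h]
      ring
    case hs3 =>
      intro x y u v h
      simp only [N4f, W3f, W2f, W1f]
      rw [if_neg h]
      ring
    case heq =>
      intro x y u v hx hy hu hv
      have hyI : y ∈ Set.Icc (0:ℝ) t := ⟨hy.1.le, le_trans hy.2.le hx.2⟩
      have huI : u ∈ Set.Icc (0:ℝ) t := ⟨hu.1.le, le_trans hu.2.le hyI.2⟩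
      have hvI : v ∈ Set.Icc (0:ℝ) t := ⟨hv.1.le, le_trans hv.2.le huI.2⟩
      have hyx : y ≤ x := hy.2.le
      have huy : u ≤ y := hu.2.le
      have hvu : v ≤ u := hv.2.le
      have hux : u ≤ x := le_trans huy hyx
      have hvy : v ≤ y := le_trans hvu huy
      have hvx : v ≤ x := le_trans hvy hyx
      have hpx : (0:ℝ) < T - x := sub_pos.2 (lt_of_le_of_lt hx.2 ht2)
      have hpy : (0:ℝ) < T - y := sub_pos.2 (lt_of_le_of_lt hyI.2 ht2)
      have hpu : (0:ℝ) < T - u := sub_pos.2 (lt_of_le_of_lt huI.2 ht2)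
      have hpv : (0:ℝ) < T - v := sub_pos.2 (lt_of_le_of_lt hvI.2 ht2)
      simp only [N4f, W3f, W2f, W1f, W0f, Phi]
      rw [if_pos hvy, if_pos hvu, if_pos hyx, if_pos hvx, if_pos huy]
      rw [show fker T α t v y
          = (1 / (2 * Real.sqrt (lam T α t))) * (T - y) ^ (α - 1) * (T - v) ^ (-α) from
        (fker_symm v y).trans (fker_eval hyI hvI hvy)]
      rw [show fker T α t v u
          = (1 / (2 * Real.sqrt (lam T α t))) * (T - u) ^ (α - 1) * (T - v) ^ (-α) from
        (fker_symm v u).trans (fker_eval huI hvI hvu)]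
      rw [fker_eval hx hyI hyx, fker_eval hx huI hux]
      rw [hm1 (T - x) hpx, hm3 (T - y) hpy, hm3 (T - u) hpu, hm2 (T - v) hpv]
      ring
    rw [pull4, nest4 h0t.le]
  -- final assembly
  have hc4 : (1 / (2 * Real.sqrt (lam T α t)))^4 = 1 / (16 * (lam T α t)^2) := by
    have h1 : Real.sqrt (lam T α t) ^ 4 = (lam T α t)^2 := by
      rw [show (4:ℕ) = 2*2 from rfl, pow_mul, Real.sq_sqrt hlam.le]
    rw [div_pow, mul_pow, one_pow, h1]
    norm_num
  have hne : lam T α t ≠ 0 := ne_of_gt hlam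
  rw [key, s1, s2, s3, s4, end1, end2, end4]
  unfold A1 A2
  rw [hc4]
  field_simp
  ring
end

section
/- As t ↑ T, λ_t · A_{t,1} converges to 1/(2α−1)², where A_{t,1} := (1/λ_t²)·∫_{0<x₁<x₂<x₃<x₄<t} (T−x₄)^{2α−2}(T−x₃)^{−1}(T−x₂)^{−1}(T−x₁)^{−2α} dx₁dx₂dx₃dx₄; equivalently, A_{t,1} = 1/((2α−1)²λ_t) + o(1/λ_t). -/
open MeasureTheory Real Filter Topology

lemma hd_rpow (T p x : ℝ) (hx : x < T) :
    HasDerivAt (fun y => (T - y) ^ p) (-(p * (T - x) ^ (p - 1))) x := by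
  have h1 : HasDerivAt (fun y : ℝ => T - y) (-1) x := by
    simpa using (hasDerivAt_id x).const_sub T
  have h2 := (Real.hasDerivAt_rpow_const (x := T - x) (p := p)
    (Or.inl (ne_of_gt (sub_pos.2 hx)))).comp x h1
  simpa [mul_comm, mul_left_comm, Function.comp_def] using h2

lemma hd_L (T x : ℝ) (hx : x < T) :
    HasDerivAt (fun y => Real.log T - Real.log (T - y)) ((T - x) ^ (-1 : ℝ)) x := by
  have h1 : HasDerivAt (fun y : ℝ => T - y) (-1) x := by
    simpa using (hasDerivAt_id x).const_sub T
  have h2 := ((Real.hasDerivAt_log (ne_of_gt (sub_pos.2 hx))).comp x h1).const_sub (Real.log T)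
  have : (T - x) ^ (-1 : ℝ) = (T - x)⁻¹ := by
    rw [Real.rpow_neg_one]
  rw [this]
  simpa using h2

lemma cont_rpow (T r b : ℝ) (hbT : b < T) :
    ContinuousOn (fun x => (T - x) ^ r) (Set.Icc 0 b) := by
  apply ContinuousOn.rpow_const
  · fun_prop
  · intro x hx
    exact Or.inl (ne_of_gt (sub_pos.2 (lt_of_le_of_lt hx.2 hbT)))

lemma cont_L (T b : ℝ) (hbT : b < T) :
    ContinuousOn (fun x => Real.log T - Real.log (T - x)) (Set.Icc 0 b) := by
  apply ContinuousOn.sub continuousOn_const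
  apply ContinuousOn.log (by fun_prop)
  intro x hx
  exact ne_of_gt (sub_pos.2 (lt_of_le_of_lt hx.2 hbT))

-- E1
lemma E1 (T p b : ℝ) (hp : p ≠ 0) (hb0 : 0 ≤ b) (hbT : b < T) :
    ∫ x in (0:ℝ)..b, (T - x) ^ (p - 1) = (T ^ p - (T - b) ^ p) / p := by
  have key : ∫ x in (0:ℝ)..b, (T - x) ^ (p - 1)
      = (fun y => -((T - y) ^ p) / p) b - (fun y => -((T - y) ^ p) / p) 0 := by
    apply intervalIntegral.integral_eq_sub_of_hasDerivAt
    · intro x hx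
      rw [Set.uIcc_of_le hb0] at hx
      have hxT : x < T := lt_of_le_of_lt hx.2 hbT
      have := ((hd_rpow T p x hxT).neg).div_const p
      convert this using 1
      exacts [rfl, rfl, by field_simp]
    · exact ((cont_rpow T (p-1) b hbT).intervalIntegrable_of_Icc hb0)
  rw [key]; simp; ring

-- E2
lemma E2 (T b : ℝ) (hb0 : 0 ≤ b) (hbT : b < T) :
    ∫ x in (0:ℝ)..b, (T - x) ^ (-1 : ℝ) = Real.log T - Real.log (T - b) := by
  have key : ∫ x in (0:ℝ)..b, (T - x) ^ (-1 : ℝ)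
      = (fun y => Real.log T - Real.log (T - y)) b - (fun y => Real.log T - Real.log (T - y)) 0 := by
    apply intervalIntegral.integral_eq_sub_of_hasDerivAt
    · intro x hx
      rw [Set.uIcc_of_le hb0] at hx
      exact hd_L T x (lt_of_le_of_lt hx.2 hbT)
    · exact ((cont_rpow T (-1) b hbT).intervalIntegrable_of_Icc hb0)
  rw [key]; simp

lemma rpow_split (T p x : ℝ) (hx : x < T) :
    (T - x) ^ p * (T - x) ^ (-1 : ℝ) = (T - x) ^ (p - 1) := by
  rw [← Real.rpow_add (sub_pos.2 hx)]; ring_nf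

-- E3
lemma E3 (T b : ℝ) (hb0 : 0 ≤ b) (hbT : b < T) :
    ∫ x in (0:ℝ)..b, (T - x) ^ (-1 : ℝ) * (Real.log T - Real.log (T - x))
      = (Real.log T - Real.log (T - b)) ^ 2 / 2 := by
  have key : (∫ x in (0:ℝ)..b, (T - x) ^ (-1 : ℝ) * (Real.log T - Real.log (T - x))) = (fun y => (Real.log T - Real.log (T - y)) ^ 2 / 2) b
      - (fun y => (Real.log T - Real.log (T - y)) ^ 2 / 2) 0 := by
    apply intervalIntegral.integral_eq_sub_of_hasDerivAt
      (f := fun y => (Real.log T - Real.log (T - y)) ^ 2 / 2)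
    · intro x hx
      rw [Set.uIcc_of_le hb0] at hx
      have hxT : x < T := lt_of_le_of_lt hx.2 hbT
      have := ((hd_L T x hxT).pow 2).div_const 2
      convert this using 1
      exacts [rfl, rfl, by push_cast; ring]
    · exact (((cont_rpow T (-1) b hbT).mul (cont_L T b hbT)).intervalIntegrable_of_Icc hb0)
  rw [key]; simp

-- E4
lemma E4 (T p b : ℝ) (hp : p ≠ 0) (hb0 : 0 ≤ b) (hbT : b < T) :
    ∫ x in (0:ℝ)..b, (T - x) ^ (p - 1) * (Real.log T - Real.log (T - x))
      = -((T - b) ^ p * (Real.log T - Real.log (T - b))) / p + (T ^ p - (T - b) ^ p) / p ^ 2 := by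
  set F : ℝ → ℝ := fun y => -((T - y) ^ p * (Real.log T - Real.log (T - y))) / p - (T - y) ^ p / p ^ 2
    with hF
  have key : (∫ x in (0:ℝ)..b, (T - x) ^ (p - 1) * (Real.log T - Real.log (T - x))) = F b - F 0 := by
    apply intervalIntegral.integral_eq_sub_of_hasDerivAt (f := F)
    · intro x hx
      rw [Set.uIcc_of_le hb0] at hx
      have hxT : x < T := lt_of_le_of_lt hx.2 hbT
      have d1 := hd_rpow T p x hxT
      have d2 := hd_L T x hxT
      have := ((d1.mul d2).neg.div_const p).sub ((d1.div_const (p ^ 2)))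
      convert this using 1
      · rfl
      rw [← rpow_split T p x hxT]
      field_simp
      ring
    · exact (((cont_rpow T (p-1) b hbT).mul (cont_L T b hbT)).intervalIntegrable_of_Icc hb0)
  rw [key, hF]
  simp
  ring

-- E5
lemma E5 (T p b : ℝ) (hp : p ≠ 0) (hb0 : 0 ≤ b) (hbT : b < T) :
    ∫ x in (0:ℝ)..b, (T - x) ^ (p - 1) * (Real.log T - Real.log (T - x)) ^ 2
      = -((T - b) ^ p * (Real.log T - Real.log (T - b)) ^ 2) / p
        - 2 * ((T - b) ^ p * (Real.log T - Real.log (T - b))) / p ^ 2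
        + 2 * (T ^ p - (T - b) ^ p) / p ^ 3 := by
  set F : ℝ → ℝ := fun y =>
    -((T - y) ^ p * (Real.log T - Real.log (T - y)) ^ 2) / p
      - 2 * ((T - y) ^ p * (Real.log T - Real.log (T - y))) / p ^ 2
      - 2 * (T - y) ^ p / p ^ 3 with hF
  have key : (∫ x in (0:ℝ)..b, (T - x) ^ (p - 1) * (Real.log T - Real.log (T - x)) ^ 2) = F b - F 0 := by
    apply intervalIntegral.integral_eq_sub_of_hasDerivAt (f := F)
    · intro x hx
      rw [Set.uIcc_of_le hb0] at hx
      have hxT : x < T := lt_of_le_of_lt hx.2 hbT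
      have d1 := hd_rpow T p x hxT
      have d2 := hd_L T x hxT
      have := (((d1.mul (d2.pow 2)).neg.div_const p).sub
        (((d1.mul d2).const_mul 2).div_const (p ^ 2))).sub ((d1.const_mul 2).div_const (p ^ 3))
      convert this using 1
      · rfl
      norm_num only [Pi.pow_apply]
      rw [← rpow_split T p x hxT]
      field_simp
      ring
    · exact (((cont_rpow T (p-1) b hbT).mul ((cont_L T b hbT).pow 2)).intervalIntegrable_of_Icc hb0)
  rw [key, hF]
  simp
  ring

lemma Emaster (T p : ℝ) (hp : p ≠ 0) (a1 a2 a3 a4 a5 b : ℝ) (hb0 : 0 ≤ b) (hbT : b < T) :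
    ∫ x in (0:ℝ)..b,
      (a1 * (T - x) ^ (p - 1) + a2 * (T - x) ^ (-1 : ℝ)
        + a3 * ((T - x) ^ (p - 1) * (Real.log T - Real.log (T - x)))
        + a4 * ((T - x) ^ (p - 1) * (Real.log T - Real.log (T - x)) ^ 2)
        + a5 * ((T - x) ^ (-1 : ℝ) * (Real.log T - Real.log (T - x))))
    = a1 * ((T ^ p - (T - b) ^ p) / p)
      + a2 * (Real.log T - Real.log (T - b))
      + a3 * (-((T - b) ^ p * (Real.log T - Real.log (T - b))) / p + (T ^ p - (T - b) ^ p) / p ^ 2)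
      + a4 * (-((T - b) ^ p * (Real.log T - Real.log (T - b)) ^ 2) / p
          - 2 * ((T - b) ^ p * (Real.log T - Real.log (T - b))) / p ^ 2
          + 2 * (T ^ p - (T - b) ^ p) / p ^ 3)
      + a5 * ((Real.log T - Real.log (T - b)) ^ 2 / 2) := by
  have i1 : IntervalIntegrable (fun x => a1 * (T - x) ^ (p - 1)) volume 0 b :=
    (((cont_rpow T (p-1) b hbT).const_smul a1).intervalIntegrable_of_Icc hb0)
  have i2 : IntervalIntegrable (fun x => a2 * (T - x) ^ (-1 : ℝ)) volume 0 b :=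
    (((cont_rpow T (-1) b hbT).const_smul a2).intervalIntegrable_of_Icc hb0)
  have i3 : IntervalIntegrable
      (fun x => a3 * ((T - x) ^ (p - 1) * (Real.log T - Real.log (T - x)))) volume 0 b :=
    ((((cont_rpow T (p-1) b hbT).mul (cont_L T b hbT)).const_smul a3).intervalIntegrable_of_Icc hb0)
  have i4 : IntervalIntegrable
      (fun x => a4 * ((T - x) ^ (p - 1) * (Real.log T - Real.log (T - x)) ^ 2)) volume 0 b :=
    ((((cont_rpow T (p-1) b hbT).mul ((cont_L T b hbT).pow 2)).const_smul a4).intervalIntegrable_of_Icc hb0)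
  have i5 : IntervalIntegrable
      (fun x => a5 * ((T - x) ^ (-1 : ℝ) * (Real.log T - Real.log (T - x)))) volume 0 b :=
    ((((cont_rpow T (-1) b hbT).mul (cont_L T b hbT)).const_smul a5).intervalIntegrable_of_Icc hb0)
  rw [intervalIntegral.integral_add (((i1.add i2).add i3).add i4) i5,
    intervalIntegral.integral_add ((i1.add i2).add i3) i4,
    intervalIntegral.integral_add (i1.add i2) i3,
    intervalIntegral.integral_add i1 i2,
    intervalIntegral.integral_const_mul, intervalIntegral.integral_const_mul,
    intervalIntegral.integral_const_mul, intervalIntegral.integral_const_mul,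
    intervalIntegral.integral_const_mul,
    E1 T p b hp hb0 hbT, E2 T b hb0 hbT, E3 T b hb0 hbT, E4 T p b hp hb0 hbT, E5 T p b hp hb0 hbT]

noncomputable def Jv (T p u : ℝ) : ℝ :=
  (1 / p ^ 3) * (Real.log T - Real.log u)
    - 3 * T ^ (-p) * (T ^ p - u ^ p) / p ^ 4
    + 2 * T ^ (-p) * (u ^ p * (Real.log T - Real.log u)) / p ^ 3
    + T ^ (-p) * (u ^ p * (Real.log T - Real.log u) ^ 2) / (2 * p ^ 2)

lemma lvl1 (T p : ℝ) (hp : p ≠ 0) (x4 x3 x2 : ℝ) (h0 : 0 ≤ x2) (hxT : x2 < T) :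
    ∫ x1 in (0:ℝ)..x2,
        (T - x4) ^ (p - 1) * (T - x3) ^ (-1 : ℝ) * (T - x2) ^ (-1 : ℝ) * (T - x1) ^ (-p - 1)
    = (T - x4) ^ (p - 1) * (T - x3) ^ (-1 : ℝ) * (T - x2) ^ (-1 : ℝ)
        * ((T ^ (-p) - (T - x2) ^ (-p)) / (-p)) := by
  rw [show (fun x1 => (T - x4) ^ (p - 1) * (T - x3) ^ (-1 : ℝ) * (T - x2) ^ (-1 : ℝ)
      * (T - x1) ^ (-p - 1))
    = (fun x1 => (T - x4) ^ (p - 1) * (T - x3) ^ (-1 : ℝ) * (T - x2) ^ (-1 : ℝ)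
      * (T - x1) ^ ((-p) - 1)) from by norm_num]
  rw [intervalIntegral.integral_const_mul, E1 T (-p) x2 (neg_ne_zero.2 hp) h0 hxT]

lemma lvl2 (T p : ℝ) (hp : p ≠ 0) (x4 x3 : ℝ) (h0 : 0 ≤ x3) (hxT : x3 < T) :
    (∫ x2 in (0:ℝ)..x3, ∫ x1 in (0:ℝ)..x2,
        (T - x4) ^ (p - 1) * (T - x3) ^ (-1 : ℝ) * (T - x2) ^ (-1 : ℝ) * (T - x1) ^ (-p - 1))
    = (T - x4) ^ (p - 1) * ((T - x3) ^ (-1 : ℝ) *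
        (((T - x3) ^ (-p) - T ^ (-p)) / p ^ 2 - T ^ (-p) * (Real.log T - Real.log (T - x3)) / p)) := by
  set C := (T - x4) ^ (p - 1) * (T - x3) ^ (-1 : ℝ) with hC
  have hcg : Set.EqOn
      (fun x2 => ∫ x1 in (0:ℝ)..x2,
        (T - x4) ^ (p - 1) * (T - x3) ^ (-1 : ℝ) * (T - x2) ^ (-1 : ℝ) * (T - x1) ^ (-p - 1))
      (fun x2 => (C / p) * (T - x2) ^ ((-p) - 1) + (-(C * T ^ (-p)) / p) * (T - x2) ^ (-1 : ℝ)
        + 0 * ((T - x2) ^ ((-p) - 1) * (Real.log T - Real.log (T - x2)))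
        + 0 * ((T - x2) ^ ((-p) - 1) * (Real.log T - Real.log (T - x2)) ^ 2)
        + 0 * ((T - x2) ^ (-1 : ℝ) * (Real.log T - Real.log (T - x2))))
      (Set.uIcc 0 x3) := by
    intro x2 hx2
    rw [Set.uIcc_of_le h0] at hx2
    have hx2T : x2 < T := lt_of_le_of_lt hx2.2 hxT
    have hy : (0:ℝ) < T - x2 := sub_pos.2 hx2T
    simp only [lvl1 T p hp x4 x3 x2 hx2.1 hx2T]
    rw [show (T - x2) ^ ((-p) - 1) = (T - x2) ^ (-p) * (T - x2) ^ (-1 : ℝ) from by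
      rw [← Real.rpow_add hy]; ring_nf]
    ring
  rw [intervalIntegral.integral_congr hcg,
    Emaster T (-p) (neg_ne_zero.2 hp) (C / p) (-(C * T ^ (-p)) / p) 0 0 0 x3 h0 hxT, hC]
  field_simp
  ring

lemma lvl3 (T p : ℝ) (hp : p ≠ 0) (x4 : ℝ) (h0 : 0 ≤ x4) (hxT : x4 < T) :
    (∫ x3 in (0:ℝ)..x4, ∫ x2 in (0:ℝ)..x3, ∫ x1 in (0:ℝ)..x2,
        (T - x4) ^ (p - 1) * (T - x3) ^ (-1 : ℝ) * (T - x2) ^ (-1 : ℝ) * (T - x1) ^ (-p - 1))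
    = (T - x4) ^ (p - 1) *
        (((T - x4) ^ (-p) - T ^ (-p)) / p ^ 3
          - T ^ (-p) * (Real.log T - Real.log (T - x4)) / p ^ 2
          - T ^ (-p) * (Real.log T - Real.log (T - x4)) ^ 2 / (2 * p)) := by
  set D := (T - x4) ^ (p - 1) with hD
  have hcg : Set.EqOn
      (fun x3 => ∫ x2 in (0:ℝ)..x3, ∫ x1 in (0:ℝ)..x2,
        (T - x4) ^ (p - 1) * (T - x3) ^ (-1 : ℝ) * (T - x2) ^ (-1 : ℝ) * (T - x1) ^ (-p - 1))
      (fun x3 => (D / p ^ 2) * (T - x3) ^ ((-p) - 1)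
        + (-(D * T ^ (-p)) / p ^ 2) * (T - x3) ^ (-1 : ℝ)
        + 0 * ((T - x3) ^ ((-p) - 1) * (Real.log T - Real.log (T - x3)))
        + 0 * ((T - x3) ^ ((-p) - 1) * (Real.log T - Real.log (T - x3)) ^ 2)
        + (-(D * T ^ (-p)) / p) * ((T - x3) ^ (-1 : ℝ) * (Real.log T - Real.log (T - x3))))
      (Set.uIcc 0 x4) := by
    intro x3 hx3
    rw [Set.uIcc_of_le h0] at hx3
    have hx3T : x3 < T := lt_of_le_of_lt hx3.2 hxT
    have hy : (0:ℝ) < T - x3 := sub_pos.2 hx3T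
    simp only [lvl2 T p hp x4 x3 hx3.1 hx3T]
    rw [show (T - x3) ^ ((-p) - 1) = (T - x3) ^ (-p) * (T - x3) ^ (-1 : ℝ) from by
      rw [← Real.rpow_add hy]; ring_nf]
    ring
  rw [intervalIntegral.integral_congr hcg,
    Emaster T (-p) (neg_ne_zero.2 hp) (D / p ^ 2) (-(D * T ^ (-p)) / p ^ 2) 0 0
      (-(D * T ^ (-p)) / p) x4 h0 hxT, hD]
  field_simp
  ring

lemma lvl4 (T p t : ℝ) (hp : p ≠ 0) (hT : 0 < T) (h0 : 0 ≤ t) (htT : t < T) :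
    (∫ x4 in (0:ℝ)..t, ∫ x3 in (0:ℝ)..x4, ∫ x2 in (0:ℝ)..x3, ∫ x1 in (0:ℝ)..x2,
        (T - x4) ^ (p - 1) * (T - x3) ^ (-1 : ℝ) * (T - x2) ^ (-1 : ℝ) * (T - x1) ^ (-p - 1))
    = Jv T p (T - t) := by
  have hcg : Set.EqOn
      (fun x4 => ∫ x3 in (0:ℝ)..x4, ∫ x2 in (0:ℝ)..x3, ∫ x1 in (0:ℝ)..x2,
        (T - x4) ^ (p - 1) * (T - x3) ^ (-1 : ℝ) * (T - x2) ^ (-1 : ℝ) * (T - x1) ^ (-p - 1))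
      (fun x4 => (-(T ^ (-p)) / p ^ 3) * (T - x4) ^ (p - 1)
        + (1 / p ^ 3) * (T - x4) ^ (-1 : ℝ)
        + (-(T ^ (-p)) / p ^ 2) * ((T - x4) ^ (p - 1) * (Real.log T - Real.log (T - x4)))
        + (-(T ^ (-p)) / (2 * p)) * ((T - x4) ^ (p - 1) * (Real.log T - Real.log (T - x4)) ^ 2)
        + 0 * ((T - x4) ^ (-1 : ℝ) * (Real.log T - Real.log (T - x4))))
      (Set.uIcc 0 t) := by
    intro x4 hx4
    rw [Set.uIcc_of_le h0] at hx4
    have hx4T : x4 < T := lt_of_le_of_lt hx4.2 htT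
    have hy : (0:ℝ) < T - x4 := sub_pos.2 hx4T
    simp only [lvl3 T p hp x4 hx4.1 hx4T]
    rw [show (T - x4) ^ (-1 : ℝ) = (T - x4) ^ (p - 1) * (T - x4) ^ (-p) from by
      rw [← Real.rpow_add hy]; ring_nf]
    ring
  rw [intervalIntegral.integral_congr hcg,
    Emaster T p hp (-(T ^ (-p)) / p ^ 3) (1 / p ^ 3) (-(T ^ (-p)) / p ^ 2)
      (-(T ^ (-p)) / (2 * p)) 0 t h0 htT, Jv]
  field_simp
  ring

lemma rpow_tendsto (p : ℝ) (hp : 0 < p) :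
    Tendsto (fun u : ℝ => u ^ p) (𝓝[>] (0:ℝ)) (𝓝 0) := by
  have h := (Real.continuousAt_rpow_const 0 p (Or.inr hp.le)).tendsto
  rw [Real.zero_rpow hp.ne'] at h
  exact h.mono_left nhdsWithin_le_nhds

lemma rpowL (T p : ℝ) (hp : 0 < p) :
    Tendsto (fun u : ℝ => u ^ p * (Real.log T - Real.log u)) (𝓝[>] (0:ℝ)) (𝓝 0) := by
  have hA : Tendsto (fun u : ℝ => u ^ p * Real.log u) (𝓝[>] (0:ℝ)) (𝓝 0) :=
    (tendsto_log_mul_rpow_nhdsGT_zero hp).congr (fun x => mul_comm _ _)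
  have := ((rpow_tendsto p hp).mul_const (Real.log T)).sub hA
  rw [zero_mul, sub_zero] at this
  exact this.congr (fun u => by ring)

lemma rpowL2 (T p : ℝ) (hp : 0 < p) :
    Tendsto (fun u : ℝ => u ^ p * (Real.log T - Real.log u) ^ 2) (𝓝[>] (0:ℝ)) (𝓝 0) := by
  have h2 := (rpowL T (p / 2) (by linarith)).mul (rpowL T (p / 2) (by linarith))
  rw [mul_zero] at h2
  apply h2.congr'
  filter_upwards [self_mem_nhdsWithin] with u hu
  have hu0 : (0:ℝ) < u := hu
  rw [show u ^ (p/2) * (Real.log T - Real.log u) * (u ^ (p/2) * (Real.log T - Real.log u))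
      = (u ^ (p/2) * u ^ (p/2)) * (Real.log T - Real.log u) ^ 2 from by ring,
    ← Real.rpow_add hu0]
  norm_num

lemma Jv_tendsto (T p : ℝ) (hT : 0 < T) (hp : 0 < p) :
    Tendsto (fun u => (p / (-Real.log u)) * Jv T p u) (𝓝[>] (0:ℝ)) (𝓝 (1 / p ^ 2)) := by
  have hl : Tendsto (fun u : ℝ => -Real.log u) (𝓝[>] (0:ℝ)) atTop :=
    tendsto_neg_atBot_atTop.comp Real.tendsto_log_nhdsGT_zero
  have hinv : Tendsto (fun u : ℝ => (-Real.log u)⁻¹) (𝓝[>] (0:ℝ)) (𝓝 0) :=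
    hl.inv_tendsto_atTop
  -- E part
  have hE : Tendsto (fun u => Jv T p u - (1 / p ^ 3) * (Real.log T - Real.log u))
      (𝓝[>] (0:ℝ)) (𝓝 (-3 / p ^ 4)) := by
    have hK : Tendsto (fun u : ℝ => -3 * T ^ (-p) * (T ^ p - u ^ p) / p ^ 4)
        (𝓝[>] (0:ℝ)) (𝓝 (-3 * T ^ (-p) * (T ^ p - 0) / p ^ 4)) := by
      exact (((tendsto_const_nhds.sub (rpow_tendsto p hp)).const_mul _).div_const _)
    have hA := ((rpowL T p hp).const_mul (2 * T ^ (-p))).div_const (p ^ 3)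
    have hB := ((rpowL2 T p hp).const_mul (T ^ (-p))).div_const (2 * p ^ 2)
    rw [mul_zero, zero_div] at hA hB
    have := (hK.add hA).add hB
    rw [add_zero, add_zero] at this
    have hval : -3 * T ^ (-p) * (T ^ p - 0) / p ^ 4 = -3 / p ^ 4 := by
      rw [sub_zero, show -3 * T ^ (-p) * T ^ p = -3 * (T ^ (-p) * T ^ p) from by ring,
        ← Real.rpow_add hT]
      norm_num
    rw [hval] at this
    exact this.congr (fun u => by rw [Jv]; ring)
  -- assemble
  have hg : Tendsto (fun u => (1 / p ^ 2) * Real.log T * (-Real.log u)⁻¹ + 1 / p ^ 2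
      + p * (Jv T p u - (1 / p ^ 3) * (Real.log T - Real.log u)) * (-Real.log u)⁻¹)
      (𝓝[>] (0:ℝ)) (𝓝 (1 / p ^ 2)) := by
    have h1 := hinv.const_mul ((1 / p ^ 2) * Real.log T)
    rw [mul_zero] at h1
    have h2 := ((hE.const_mul p).mul hinv)
    rw [mul_zero] at h2
    have := (h1.add (tendsto_const_nhds (x := 1 / p ^ 2))).add h2
    rw [zero_add, add_zero] at this
    exact this
  apply hg.congr'
  filter_upwards [Ioo_mem_nhdsGT_of_mem (Set.mem_Ico.2 ⟨le_refl (0:ℝ), zero_lt_one⟩)] with u hu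
  have hlog : Real.log u < 0 := Real.log_neg hu.1 hu.2
  set l := -Real.log u with hldef
  have hne : l ≠ 0 := by rw [hldef]; linarith
  have hlu : Real.log u = -l := by rw [hldef]; ring
  rw [hlu]
  field_simp
  ring

theorem stmt_7 (T α : ℝ) (hT : 0 < T) (hα : 1 / 2 < α) :
    Tendsto (fun t => lam T α t * A1 T α t)
      (𝓝[<] T) (𝓝 (1 / (2 * α - 1) ^ 2)) := by
  set p := 2 * α - 1 with hpd
  have hp0 : 0 < p := by rw [hpd]; linarith
  clear_value p
  have hcomp : Tendsto (fun t => T - t) (𝓝[<] T) (𝓝[>] (0:ℝ)) := by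
    apply tendsto_nhdsWithin_of_tendsto_nhds_of_eventually_within
    · have h : Tendsto (fun t : ℝ => T - t) (𝓝 T) (𝓝 (T - T)) :=
        (continuous_const.sub continuous_id).tendsto T
      rw [sub_self] at h
      exact h.mono_left nhdsWithin_le_nhds
    · filter_upwards [self_mem_nhdsWithin] with t ht
      exact sub_pos.2 (Set.mem_Iio.1 ht)
  have hmain := (Jv_tendsto T p hT hp0).comp hcomp
  apply hmain.congr'
  have hlt : max 0 (T - 1/2) < T := max_lt hT (by linarith)
  filter_upwards [Ioo_mem_nhdsLT_of_mem (Set.mem_Ioc.2 ⟨hlt, le_refl T⟩)] with t ht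
  have ht0 : 0 ≤ t := le_of_lt (lt_of_le_of_lt (le_max_left 0 (T - 1/2)) ht.1)
  have htT : t < T := ht.2
  have hu0 : 0 < T - t := sub_pos.2 htT
  have hu1 : T - t < 1 := by
    have := lt_of_le_of_lt (le_max_right 0 (T - 1/2)) ht.1
    linarith
  have hlog : Real.log (T - t) < 0 := Real.log_neg hu0 hu1
  have habs : |Real.log (T - t)| = -Real.log (T - t) := abs_of_neg hlog
  have hQ : (∫ x4 in (0:ℝ)..t, ∫ x3 in (0:ℝ)..x4, ∫ x2 in (0:ℝ)..x3, ∫ x1 in (0:ℝ)..x2,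
      (T - x4) ^ (2 * α - 2) * (T - x3) ^ (-1 : ℝ) * (T - x2) ^ (-1 : ℝ) *
        (T - x1) ^ (-(2 * α))) = Jv T p (T - t) := by
    have e1 : -(2 * α) = -p - 1 := by rw [hpd]; ring
    have e2 : 2 * α - 2 = p - 1 := by rw [hpd]; ring
    simp only [e1, e2]
    exact lvl4 T p t hp0.ne' hT ht0 htT
  show (p / (-Real.log (T - t))) * Jv T p (T - t) = lam T α t * A1 T α t
  rw [A1, lam, ← hpd, hQ, habs]
  have hne : -Real.log (T - t) ≠ 0 := by linarith
  have hlne : Real.log (T - t) ≠ 0 := ne_of_lt hlog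
  field_simp [hp0.ne', hlne]
end

section
/- As t ↑ T, λ_t · A_{t,2} converges to 1/(4(2α−1)²), where A_{t,2} := (1/(2λ_t²))·∫_{0<x₁<x₃<x₂<x₄<t} (T−x₄)^{2α−2}(T−x₂)^{2α−2}(T−x₃)^{−2α}(T−x₁)^{−2α} dx₁dx₃dx₂dx₄; equivalently, A_{t,2} = 1/(4(2α−1)²λ_t) + o(1/λ_t). -/
open MeasureTheory Real Filter Topology

lemma hdTrpow (T p : ℝ) {x : ℝ} (hx : x < T) :
    HasDerivAt (fun u => (T - u) ^ p) (-(p * (T - x) ^ (p - 1))) x := by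
  have h1 : HasDerivAt (fun u : ℝ => T - u) (-1) x := by
    simpa using (hasDerivAt_id x).const_sub T
  have h2 := (Real.hasDerivAt_rpow_const (x := T - x) (p := p)
    (Or.inl (by linarith))).comp x h1
  exact h2.congr_deriv (by ring)

lemma hdTlog (T : ℝ) {x : ℝ} (hx : x < T) :
    HasDerivAt (fun u => Real.log (T - u)) (-(T - x)⁻¹) x := by
  have h1 : HasDerivAt (fun u : ℝ => T - u) (-1) x := by
    simpa using (hasDerivAt_id x).const_sub T
  have h2 := (Real.hasDerivAt_log (by linarith : T - x ≠ 0)).comp x h1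
  exact h2.congr_deriv (by ring)

lemma contTrpow (T p : ℝ) {s : Set ℝ} (hs : ∀ x ∈ s, x < T) :
    ContinuousOn (fun u => (T - u) ^ p) s :=
  (continuous_const.sub continuous_id).continuousOn.rpow_const
    (fun x hx => Or.inl (by have := hs x hx; intro h; simp only [Pi.sub_apply] at h; rw [sub_eq_zero] at h; simp only [id_eq] at h; linarith))

lemma contTlog (T : ℝ) {s : Set ℝ} (hs : ∀ x ∈ s, x < T) :
    ContinuousOn (fun u => Real.log (T - u)) s :=
  ContinuousOn.log (continuous_const.sub continuous_id).continuousOn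
    (fun x hx => by have := hs x hx; intro h; rw [sub_eq_zero] at h; linarith)

noncomputable def P1 (T b u : ℝ) : ℝ := (T - u) ^ (-b) / b

noncomputable def P2 (T b u : ℝ) : ℝ :=
  (T - u) ^ (-(2 * b)) / (2 * b ^ 2) - T ^ (-b) * (T - u) ^ (-b) / b ^ 2

noncomputable def P3 (T b u : ℝ) : ℝ :=
  (T - u) ^ (-b) / (2 * b ^ 3) + T ^ (-b) * Real.log (T - u) / b ^ 2
    - T ^ (-(2 * b)) * (T - u) ^ b / (2 * b ^ 3)

noncomputable def P4 (T b u : ℝ) : ℝ :=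
  -Real.log (T - u) / (2 * b ^ 3)
    - T ^ (-b) / b ^ 2 * ((T - u) ^ b * (Real.log (T - u) / b - 1 / b ^ 2))
    + T ^ (-(2 * b)) / (4 * b ^ 4) * (T - u) ^ (2 * b)
    + T ^ (-b) * Real.log T / b ^ 3 * (T - u) ^ b

lemma uIcc_lt {T s x : ℝ} (hT : 0 < T) (hs : s < T) (hx : x ∈ Set.uIcc 0 s) : x < T := by
  rcases le_total 0 s with h | h
  · rw [Set.uIcc_of_le h] at hx; exact lt_of_le_of_lt hx.2 hs
  · rw [Set.uIcc_of_ge h] at hx; exact lt_of_le_of_lt hx.2 hT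

lemma step1 (T b : ℝ) (hT : 0 < T) (hb : 0 < b) {s : ℝ} (hs : s < T) :
    ∫ x in (0:ℝ)..s, (T - x) ^ (-(b + 1)) = P1 T b s - P1 T b 0 := by
  apply intervalIntegral.integral_eq_sub_of_hasDerivAt
  · intro x hx
    have hx' : x < T := uIcc_lt hT hs hx
    have hpos : 0 < T - x := by linarith
    have h := (hdTrpow T (-b) hx').div_const b
    have he : -(-b * (T - x) ^ (-b - 1)) / b = (T - x) ^ (-(b + 1)) := by
      rw [show (-b - 1 : ℝ) = -(b + 1) by ring]
      field_simp
    rw [he] at h; exact h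
  · exact (contTrpow T (-(b+1)) (fun x hx => uIcc_lt hT hs hx)).intervalIntegrable

lemma step2 (T b : ℝ) (hT : 0 < T) (hb : 0 < b) {s : ℝ} (hs : s < T) :
    ∫ x in (0:ℝ)..s, (T - x) ^ (-(b + 1)) * (P1 T b x - P1 T b 0)
      = P2 T b s - P2 T b 0 := by
  apply intervalIntegral.integral_eq_sub_of_hasDerivAt
  · intro x hx
    have hx' : x < T := uIcc_lt hT hs hx
    have hpos : 0 < T - x := by linarith
    have h := ((hdTrpow T (-(2*b)) hx').div_const (2*b^2)).sub
      (((hdTrpow T (-b) hx').const_mul (T^(-b))).div_const (b^2))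
    have : HasDerivAt (fun u => P2 T b u)
        (-(-(2*b) * (T-x)^(-(2*b)-1)) / (2*b^2) - T^(-b) * -(-b * (T-x)^(-b-1)) / b^2) x := h
    refine this.congr_deriv ?_
    symm
    simp only [P1, sub_zero]
    rw [show (-(2*b)-1 : ℝ) = -b + (-b + -1) by ring, show (-b-1 : ℝ) = -b + -1 by ring,
      show (-(b+1) : ℝ) = -b + -1 by ring]
    simp only [Real.rpow_add hpos]
    field_simp
  · apply ContinuousOn.intervalIntegrable
    exact (contTrpow T (-(b+1)) (fun x hx => uIcc_lt hT hs hx)).mul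
      (((contTrpow T (-b) (fun x hx => uIcc_lt hT hs hx)).div_const b).sub continuousOn_const)

lemma step3 (T b : ℝ) (hT : 0 < T) (hb : 0 < b) {s : ℝ} (hs : s < T) :
    ∫ x in (0:ℝ)..s, (T - x) ^ (b - 1) * (P2 T b x - P2 T b 0)
      = P3 T b s - P3 T b 0 := by
  apply intervalIntegral.integral_eq_sub_of_hasDerivAt
  · intro x hx
    have hx' : x < T := uIcc_lt hT hs hx
    have hpos : 0 < T - x := by linarith
    have h := (((hdTrpow T (-b) hx').div_const (2*b^3)).add
      (((hdTlog T hx').const_mul (T^(-b))).div_const (b^2))).sub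
      (((hdTrpow T b hx').const_mul (T^(-(2*b)))).div_const (2*b^3))
    have h' : HasDerivAt (fun u => P3 T b u)
        (-(-b * (T-x)^(-b-1)) / (2*b^3) + T^(-b) * -(T-x)⁻¹ / b^2
          - T^(-(2*b)) * -(b * (T-x)^(b-1)) / (2*b^3)) x := h
    refine h'.congr_deriv ?_
    symm
    simp only [P2, sub_zero]
    rw [show (-b-1:ℝ) = -b + -1 by ring, show (b-1:ℝ) = b + -1 by ring,
      show (-(2*b):ℝ) = -b + -b by ring]
    simp only [Real.rpow_add hpos, Real.rpow_add hT, Real.rpow_neg hpos.le,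
      Real.rpow_neg hT.le, Real.rpow_one, Real.rpow_neg_one]
    have h1 : (T - x) ^ b ≠ 0 := ne_of_gt (Real.rpow_pos_of_pos hpos b)
    have h2 : (T:ℝ) ^ b ≠ 0 := ne_of_gt (Real.rpow_pos_of_pos hT b)
    field_simp
    ring
  · apply ContinuousOn.intervalIntegrable
    exact (contTrpow T (b-1) (fun x hx => uIcc_lt hT hs hx)).mul
      ((((contTrpow T (-(2*b)) (fun x hx => uIcc_lt hT hs hx)).div_const (2*b^2)).sub
        (((contTrpow T (-b) (fun x hx => uIcc_lt hT hs hx)).const_smul (T^(-b))).div_const (b^2))).sub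
        continuousOn_const)

lemma step4 (T b : ℝ) (hT : 0 < T) (hb : 0 < b) {s : ℝ} (hs : s < T) :
    ∫ x in (0:ℝ)..s, (T - x) ^ (b - 1) * (P3 T b x - P3 T b 0)
      = P4 T b s - P4 T b 0 := by
  apply intervalIntegral.integral_eq_sub_of_hasDerivAt
  · intro x hx
    have hx' : x < T := uIcc_lt hT hs hx
    have hpos : 0 < T - x := by linarith
    have t1 := ((hdTlog T hx').neg).div_const (2*b^3)
    have t2 := ((hdTrpow T b hx').mul (((hdTlog T hx').div_const b).sub_const
      (1/b^2))).const_mul (T^(-b)/b^2)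
    have t3 := (hdTrpow T (2*b) hx').const_mul (T^(-(2*b))/(4*b^4))
    have t4 := (hdTrpow T b hx').const_mul (T^(-b)*Real.log T/b^3)
    have h := ((t1.sub t2).add t3).add t4
    have h' : HasDerivAt (fun u => P4 T b u)
        (- -(T-x)⁻¹ / (2*b^3)
          - T^(-b)/b^2 * (-(b * (T-x)^(b-1)) * (Real.log (T-x)/b - 1/b^2)
              + (T-x)^b * (-(T-x)⁻¹ / b))
          + T^(-(2*b))/(4*b^4) * -(2*b * (T-x)^(2*b-1))
          + T^(-b)*Real.log T/b^3 * -(b * (T-x)^(b-1))) x := h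
    refine h'.congr_deriv ?_
    symm
    simp only [P3, sub_zero]
    rw [show (b-1:ℝ) = b + -1 by ring, show (2*b-1:ℝ) = b + (b + -1) by ring,
      show (-(2*b):ℝ) = -b + -b by ring, show (2*b:ℝ) = b + b by ring]
    simp only [Real.rpow_add hpos, Real.rpow_add hT, Real.rpow_neg hpos.le,
      Real.rpow_neg hT.le, Real.rpow_one, Real.rpow_neg_one]
    have h1 : (T - x) ^ b ≠ 0 := ne_of_gt (Real.rpow_pos_of_pos hpos b)
    have h2 : (T:ℝ) ^ b ≠ 0 := ne_of_gt (Real.rpow_pos_of_pos hT b)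
    field_simp
    ring
  · apply ContinuousOn.intervalIntegrable
    have hlt : ∀ x ∈ Set.uIcc (0:ℝ) s, x < T := fun x hx => uIcc_lt hT hs hx
    exact (contTrpow T (b-1) hlt).mul
      ((((contTrpow T (-b) hlt).div_const (2*b^3)).add
        (((contTlog T hlt).const_smul (T^(-b))).div_const (b^2))).sub
        (((contTrpow T b hlt).const_smul (T^(-(2*b)))).div_const (2*b^3)) |>.sub
        continuousOn_const)

lemma quad (T b t : ℝ) (hT : 0 < T) (hb : 0 < b) (ht : t < T) :
    (∫ x4 in (0:ℝ)..t, ∫ x2 in (0:ℝ)..x4, ∫ x3 in (0:ℝ)..x2, ∫ x1 in (0:ℝ)..x3,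
        (T - x4) ^ (b - 1) * (T - x2) ^ (b - 1) * (T - x3) ^ (-(b + 1)) *
          (T - x1) ^ (-(b + 1)))
      = P4 T b t - P4 T b 0 := by
  rw [intervalIntegral.integral_congr
    (g := fun x4 => (T - x4) ^ (b - 1) * (P3 T b x4 - P3 T b 0)) ?_]
  · exact step4 T b hT hb ht
  intro x4 hx4
  have h4 : x4 < T := uIcc_lt hT ht hx4
  have e2 : (∫ x2 in (0:ℝ)..x4, ∫ x3 in (0:ℝ)..x2, ∫ x1 in (0:ℝ)..x3,
      (T - x4) ^ (b - 1) * (T - x2) ^ (b - 1) * (T - x3) ^ (-(b + 1)) *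
        (T - x1) ^ (-(b + 1)))
      = ∫ x2 in (0:ℝ)..x4, (T - x4) ^ (b - 1) *
          ((T - x2) ^ (b - 1) * (P2 T b x2 - P2 T b 0)) := by
    apply intervalIntegral.integral_congr
    intro x2 hx2
    have h2 : x2 < T := uIcc_lt hT h4 hx2
    have e3 : (∫ x3 in (0:ℝ)..x2, ∫ x1 in (0:ℝ)..x3,
        (T - x4) ^ (b - 1) * (T - x2) ^ (b - 1) * (T - x3) ^ (-(b + 1)) *
          (T - x1) ^ (-(b + 1)))
        = ∫ x3 in (0:ℝ)..x2, ((T - x4) ^ (b - 1) * (T - x2) ^ (b - 1)) *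
            ((T - x3) ^ (-(b + 1)) * (P1 T b x3 - P1 T b 0)) := by
      apply intervalIntegral.integral_congr
      intro x3 hx3
      have h3 : x3 < T := uIcc_lt hT h2 hx3
      simp only
      rw [intervalIntegral.integral_const_mul, step1 T b hT hb h3]
      ring
    simp only
    rw [e3, intervalIntegral.integral_const_mul, step2 T b hT hb h2]
    ring
  simp only
  rw [e2, intervalIntegral.integral_const_mul, step3 T b hT hb h4]

theorem stmt_8 (T α : ℝ) (hT : 0 < T) (hα : 1 / 2 < α) :
    Tendsto (fun t => lam T α t * A2 T α t)
      (𝓝[<] T) (𝓝 (1 / (4 * (2 * α - 1) ^ 2))) := by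
  have hb : (0:ℝ) < 2 * α - 1 := by linarith
  have H0 : Tendsto (fun t => T - t) (𝓝[<] T) (𝓝[>] (0:ℝ)) := by
    refine tendsto_nhdsWithin_of_tendsto_nhds_of_eventually_within _ ?_ ?_
    · have : Tendsto (fun t : ℝ => T - t) (𝓝 T) (𝓝 (T - T)) :=
        (continuous_const.sub continuous_id).tendsto T
      simpa using this.mono_left nhdsWithin_le_nhds
    · filter_upwards [self_mem_nhdsWithin] with t ht
      exact sub_pos.2 (Set.mem_Iio.mp ht)
  have hev : ∀ᶠ t in 𝓝[<] T, lam T α t * A2 T α t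
      = 1/(4*(2*α-1)^2)
        + (P4 T (2*α-1) t + Real.log (T-t)/(2*(2*α-1)^3) - P4 T (2*α-1) 0)
          * ((2*α-1) * (2 * -Real.log (T-t))⁻¹) := by
    filter_upwards [Ioo_mem_nhdsLT (show T - 1 < T by linarith)] with t ht
    obtain ⟨ht1, ht2⟩ := ht
    have hu0 : 0 < T - t := by linarith
    have hlogneg : Real.log (T - t) < 0 := Real.log_neg hu0 (by linarith)
    have hQ := quad T (2*α-1) t hT hb ht2
    simp only [A2, lam]
    simp only [show (2*α - 2 : ℝ) = (2*α-1) - 1 by ring,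
      show (-(2*α) : ℝ) = -((2*α-1)+1) by ring]
    rw [hQ, abs_of_neg hlogneg]
    have hlne : Real.log (T-t) ≠ 0 := ne_of_lt hlogneg
    have hbne : (2*α-1) ≠ 0 := ne_of_gt hb
    have key : ∀ L B q1 q0 : ℝ, L ≠ 0 → B ≠ 0 →
        -L/B * (1/(2*(-L/B)^2) * (q1 - q0))
          = 1/(4*B^2) + (q1 + L/(2*B^3) - q0) * (B * (2 * -L)⁻¹) := by
      intro L B q1 q0 hL hB
      field_simp
      ring
    exact key (Real.log (T-t)) (2*α-1) _ _ hlne hbne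
  have Hrp : Tendsto (fun t => (T-t) ^ (2*α-1)) (𝓝[<] T) (𝓝 0) := by
    have h1 : Tendsto (fun u : ℝ => u ^ (2*α-1)) (𝓝[>] (0:ℝ)) (𝓝 0) := by
      have := (Real.continuousAt_rpow_const 0 (2*α-1) (Or.inr hb.le)).tendsto
      rw [Real.zero_rpow (ne_of_gt hb)] at this
      exact this.mono_left nhdsWithin_le_nhds
    exact h1.comp H0
  have Hrp2 : Tendsto (fun t => (T-t) ^ (2*(2*α-1))) (𝓝[<] T) (𝓝 0) := by
    have hb2 : (0:ℝ) < 2*(2*α-1) := by linarith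
    have h1 : Tendsto (fun u : ℝ => u ^ (2*(2*α-1))) (𝓝[>] (0:ℝ)) (𝓝 0) := by
      have := (Real.continuousAt_rpow_const 0 (2*(2*α-1)) (Or.inr hb2.le)).tendsto
      rw [Real.zero_rpow (ne_of_gt hb2)] at this
      exact this.mono_left nhdsWithin_le_nhds
    exact h1.comp H0
  have Hlogrp : Tendsto (fun t => Real.log (T-t) * (T-t) ^ (2*α-1)) (𝓝[<] T) (𝓝 0) :=
    (tendsto_log_mul_rpow_nhdsGT_zero hb).comp H0
  have hinv : Tendsto (fun t => (2 * -Real.log (T-t))⁻¹) (𝓝[<] T) (𝓝 0) := by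
    have hneg : Tendsto (fun t => -Real.log (T-t)) (𝓝[<] T) atTop :=
      tendsto_neg_atBot_atTop.comp (Real.tendsto_log_nhdsGT_zero.comp H0)
    exact tendsto_inv_atTop_zero.comp (hneg.const_mul_atTop two_pos)
  have Ha : Tendsto (fun t => P4 T (2*α-1) t + Real.log (T-t)/(2*(2*α-1)^3))
      (𝓝[<] T) (𝓝 0) := by
    have hE : Tendsto (fun t =>
        -(T^(-(2*α-1))/(2*α-1)^2) * ((Real.log (T-t) * (T-t)^(2*α-1))/(2*α-1)
            - (T-t)^(2*α-1)/(2*α-1)^2)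
          + T^(-(2*(2*α-1)))/(4*(2*α-1)^4) * (T-t)^(2*(2*α-1))
          + T^(-(2*α-1))*Real.log T/(2*α-1)^3 * (T-t)^(2*α-1)) (𝓝[<] T)
        (𝓝 (-(T^(-(2*α-1))/(2*α-1)^2) * (0/(2*α-1) - 0/(2*α-1)^2)
          + T^(-(2*(2*α-1)))/(4*(2*α-1)^4) * 0
          + T^(-(2*α-1))*Real.log T/(2*α-1)^3 * 0)) := by
      exact ((((Hlogrp.div_const _).sub (Hrp.div_const _)).const_mul _).add
        (Hrp2.const_mul _)).add (Hrp.const_mul _)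
    have hval : (-(T^(-(2*α-1))/(2*α-1)^2) * ((0:ℝ)/(2*α-1) - 0/(2*α-1)^2)
          + T^(-(2*(2*α-1)))/(4*(2*α-1)^4) * 0
          + T^(-(2*α-1))*Real.log T/(2*α-1)^3 * 0) = 0 := by ring
    rw [hval] at hE
    refine hE.congr (fun t => ?_)
    simp only [P4]
    ring
  have Hlim : Tendsto (fun t => 1/(4*(2*α-1)^2)
      + (P4 T (2*α-1) t + Real.log (T-t)/(2*(2*α-1)^3) - P4 T (2*α-1) 0)
        * ((2*α-1) * (2 * -Real.log (T-t))⁻¹)) (𝓝[<] T)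
      (𝓝 (1/(4*(2*α-1)^2))) := by
    have h2 := (Ha.sub_const (P4 T (2*α-1) 0)).mul (hinv.const_mul (2*α-1))
    have h3 : Tendsto (fun t => 1/(4*(2*α-1)^2)
        + ((P4 T (2*α-1) t + Real.log (T-t)/(2*(2*α-1)^3) - P4 T (2*α-1) 0)
          * ((2*α-1) * (2 * -Real.log (T-t))⁻¹))) (𝓝[<] T)
        (𝓝 (1/(4*(2*α-1)^2) + (0 - P4 T (2*α-1) 0) * ((2*α-1) * 0))) :=
      tendsto_const_nhds.add h2
    simpa using h3
  exact Hlim.congr' (hev.mono fun _ h => h.symm)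
end

section
/- There exists a constant C > 0, depending only on α and T, such that for every t with max(0, T − 1/e) < t < T one has ‖g_t‖ ≤ C/√λ_t. -/
open MeasureTheory Real Filter Topology

lemma intTinv (T a b : ℝ) (hab : a ≤ b) (hb : b < T) :
    ∫ v in a..b, (T - v)⁻¹ = Real.log (T - a) - Real.log (T - b) := by
  rw [intervalIntegral.integral_comp_sub_left (fun x => x⁻¹) T]
  rw [integral_inv (by
    intro h
    have h1 : 0 < T - b := by linarith
    rcases Set.mem_uIcc.mp h with ⟨h2, _⟩ | ⟨h2, _⟩ <;> linarith)]
  rw [Real.log_div (by linarith : T - a ≠ 0) (by linarith : T - b ≠ 0)]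

lemma intTsub (T a b p : ℝ) (hab : a ≤ b) (hb : b < T) (hp : p ≠ -1) :
    ∫ v in a..b, (T - v) ^ p = ((T - a) ^ (p + 1) - (T - b) ^ (p + 1)) / (p + 1) := by
  rw [intervalIntegral.integral_comp_sub_left (fun x => x ^ p) T]
  rw [integral_rpow (Or.inr ⟨hp, by
    intro h
    have h1 : 0 < T - b := by linarith
    rcases Set.mem_uIcc.mp h with ⟨h2, _⟩ | ⟨h2, _⟩ <;> linarith⟩)]

lemma inner_bd (T α t : ℝ) (hα : 1 / 2 < α) (ht0 : 0 ≤ t) (htT : t < T)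
    (hL : 0 < |Real.log (T - t)|) (u : ℝ) (hu : u ∈ Set.Icc (0:ℝ) t) :
    ∫ v in Set.Icc (0:ℝ) T, gker T α t u v * gker T α t u v ≤
      2 * (T - u)⁻¹ / ((2 * α - 1) * |Real.log (T - t)| ^ 2) := by
  set L := |Real.log (T - t)| with hLdef
  have hα' : (0:ℝ) < 2 * α - 1 := by linarith
  have hTt : 0 < T - t := by linarith
  have hTu : 0 < T - u := by have := hu.2; linarith
  set F : ℝ → ℝ := fun v =>
    (T - u) ^ (-(2*α)) * (T - v) ^ (-(2*α)) * (T - max u v) ^ (2*(2*α-1)) / L ^ 2 with hFdef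
  set φ : ℝ → ℝ := (Set.Icc (0:ℝ) t).indicator F with hφdef
  -- pointwise bound
  have hptw : ∀ v, gker T α t u v * gker T α t u v ≤ φ v := by
    intro v
    by_cases hv : v ∈ Set.Icc (0:ℝ) t
    · have hTv : 0 < T - v := by have := hv.2; linarith
      have hTm : 0 < T - max u v := by
        rcases max_cases u v with ⟨h, _⟩ | ⟨h, _⟩ <;> rw [h] <;> assumption
      have hmt : T - t ≤ T - max u v := by
        rcases max_cases u v with ⟨h, _⟩ | ⟨h, _⟩ <;> rw [h]
        · have := hu.2; linarith
        · have := hv.2; linarith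
      have hD0 : 0 ≤ (T - max u v) ^ (2*α-1) - (T - t) ^ (2*α-1) :=
        sub_nonneg.mpr (Real.rpow_le_rpow hTt.le hmt hα'.le)
      have hD1 : (T - max u v) ^ (2*α-1) - (T - t) ^ (2*α-1) ≤ (T - max u v) ^ (2*α-1) :=
        sub_le_self _ (Real.rpow_nonneg hTt.le _)
      rw [hφdef, Set.indicator_of_mem hv, gker, if_pos ⟨hu, hv⟩]
      have key : (T - u) ^ (-α) * (T - v) ^ (-α) *
          ((T - max u v) ^ (2 * α - 1) - (T - t) ^ (2 * α - 1)) / L ≤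
          (T - u) ^ (-α) * (T - v) ^ (-α) * (T - max u v) ^ (2 * α - 1) / L := by
        apply (div_le_div_iff_of_pos_right hL).mpr
        exact mul_le_mul_of_nonneg_left hD1
          (mul_nonneg (Real.rpow_nonneg hTu.le _) (Real.rpow_nonneg hTv.le _))
      have hgnn : 0 ≤ (T - u) ^ (-α) * (T - v) ^ (-α) *
          ((T - max u v) ^ (2 * α - 1) - (T - t) ^ (2 * α - 1)) / L := by
        apply div_nonneg _ hL.le
        exact mul_nonneg (mul_nonneg (Real.rpow_nonneg hTu.le _) (Real.rpow_nonneg hTv.le _)) hD0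
      calc _ ≤ ((T - u) ^ (-α) * (T - v) ^ (-α) * (T - max u v) ^ (2 * α - 1) / L) *
              ((T - u) ^ (-α) * (T - v) ^ (-α) * (T - max u v) ^ (2 * α - 1) / L) :=
            mul_le_mul key key hgnn (le_trans hgnn key)
        _ = F v := by
            rw [hFdef]
            have e1 : (T - u) ^ (-(2*α)) = (T - u) ^ (-α) * (T - u) ^ (-α) := by
              rw [← Real.rpow_add hTu]; norm_num; ring_nf
            have e2 : (T - v) ^ (-(2*α)) = (T - v) ^ (-α) * (T - v) ^ (-α) := by
              rw [← Real.rpow_add hTv]; norm_num; ring_nf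
            have e3 : (T - max u v) ^ (2*(2*α-1)) =
                (T - max u v) ^ (2*α-1) * (T - max u v) ^ (2*α-1) := by
              rw [← Real.rpow_add hTm]; norm_num; ring_nf
            simp only [e1, e2, e3]; ring
    · rw [gker, if_neg (fun h => hv h.2), hφdef, Set.indicator_of_notMem hv]
      simp
  -- continuity of F on Icc 0 t
  have hFcont : ContinuousOn F (Set.Icc 0 t) := by
    have h1 : ContinuousOn (fun v : ℝ => (T - v) ^ (-(2*α))) (Set.Icc 0 t) := by
      apply ContinuousOn.rpow_const (by fun_prop)
      intro x hx; left; have := hx.2; intro h; linarith [h]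
    have h2 : ContinuousOn (fun v : ℝ => (T - max u v) ^ (2*(2*α-1))) (Set.Icc 0 t) := by
      apply ContinuousOn.rpow_const (by fun_prop)
      intro x hx; left
      have : max u x ≤ t := max_le hu.2 hx.2
      intro h; linarith [h]
    rw [hFdef]
    exact ((continuousOn_const.mul h1).mul h2).div_const _
  have hFint : IntegrableOn F (Set.Icc 0 t) := hFcont.integrableOn_compact isCompact_Icc
  have hφint : Integrable φ (volume.restrict (Set.Icc (0:ℝ) T)) := by
    apply MeasureTheory.IntegrableOn.integrable_indicator _ measurableSet_Icc
    rw [IntegrableOn, Measure.restrict_restrict measurableSet_Icc,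
      Set.inter_eq_self_of_subset_left (Set.Icc_subset_Icc_right htT.le)]
    exact hFint
  have hle := integral_mono_of_nonneg
    (Filter.Eventually.of_forall (fun v => mul_self_nonneg (gker T α t u v)))
    hφint (Filter.Eventually.of_forall hptw)
  refine hle.trans ?_
  -- compute ∫ φ
  have hstep : ∫ v in Set.Icc (0:ℝ) T, φ v = ∫ v in (0:ℝ)..t, F v := by
    rw [hφdef, MeasureTheory.integral_indicator measurableSet_Icc,
      Measure.restrict_restrict measurableSet_Icc,
      Set.inter_eq_self_of_subset_left (Set.Icc_subset_Icc_right htT.le),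
      MeasureTheory.integral_Icc_eq_integral_Ioc, ← intervalIntegral.integral_of_le ht0]
  rw [hstep]
  have hI1 : IntervalIntegrable F volume 0 u :=
    (hFcont.mono (by rw [Set.uIcc_of_le hu.1]; exact Set.Icc_subset_Icc_right hu.2)).intervalIntegrable
  have hI2 : IntervalIntegrable F volume u t :=
    (hFcont.mono (by rw [Set.uIcc_of_le hu.2]; exact Set.Icc_subset_Icc_left hu.1)).intervalIntegrable
  rw [← intervalIntegral.integral_add_adjacent_intervals hI1 hI2]
  -- piece 1
  have hp1 : ∫ v in (0:ℝ)..u, F v ≤ (T - u)⁻¹ / ((2*α-1) * L^2) := by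
    have hcongr : ∫ v in (0:ℝ)..u, F v =
        ∫ v in (0:ℝ)..u, ((T - u) ^ (-(2*α)) * (T - u) ^ (2*(2*α-1)) / L ^ 2) * (T - v) ^ (-(2*α)) := by
      apply intervalIntegral.integral_congr
      intro v hv
      rw [Set.uIcc_of_le hu.1] at hv
      rw [hFdef]
      simp only
      rw [max_eq_left hv.2]
      ring
    rw [hcongr, intervalIntegral.integral_const_mul]
    rw [intTsub T 0 u (-(2*α)) hu.1 (by linarith) (by intro h; linarith [h])]
    have hcnn : 0 ≤ (T - u) ^ (-(2*α)) * (T - u) ^ (2*(2*α-1)) / L ^ 2 := by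
      apply div_nonneg _ (sq_nonneg L)
      exact mul_nonneg (Real.rpow_nonneg hTu.le _) (Real.rpow_nonneg hTu.le _)
    have hval : ((T - 0) ^ (-(2*α) + 1) - (T - u) ^ (-(2*α) + 1)) / (-(2*α) + 1) ≤
        (T - u) ^ (-(2*α) + 1) / (2*α - 1) := by
      rw [show (-(2*α) + 1 : ℝ) = -(2*α - 1) by ring, div_neg, ← neg_div, neg_sub]
      exact (div_le_div_iff_of_pos_right hα').mpr
        (sub_le_self _ (Real.rpow_nonneg (by linarith) _))
    calc _ ≤ ((T - u) ^ (-(2*α)) * (T - u) ^ (2*(2*α-1)) / L ^ 2) *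
            ((T - u) ^ (-(2*α) + 1) / (2*α - 1)) := by
          exact mul_le_mul_of_nonneg_left hval hcnn
      _ = (T - u)⁻¹ / ((2*α-1) * L^2) := by
          rw [div_mul_div_comm, ← Real.rpow_add hTu, ← Real.rpow_add hTu,
            show -(2*α) + 2*(2*α-1) + (-(2*α) + 1) = (-1 : ℝ) by ring, Real.rpow_neg_one]
          ring
  -- piece 2
  have hp2 : ∫ v in u..t, F v ≤ (T - u)⁻¹ / ((2*α-1) * L^2) := by
    have hcongr : ∫ v in u..t, F v =
        ∫ v in u..t, ((T - u) ^ (-(2*α)) / L ^ 2) * (T - v) ^ (2*α - 2) := by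
      apply intervalIntegral.integral_congr
      intro v hv
      rw [Set.uIcc_of_le hu.2] at hv
      have hTv : 0 < T - v := by have := hv.2; linarith
      have e : (T - v) ^ (-(2*α)) * (T - v) ^ (2*(2*α-1)) = (T - v) ^ (2*α - 2) := by
        rw [← Real.rpow_add hTv]; congr 1; ring
      rw [hFdef]
      simp only
      rw [max_eq_right hv.1, ← e]
      ring
    rw [hcongr, intervalIntegral.integral_const_mul]
    rw [intTsub T u t (2*α - 2) hu.2 htT (by intro h; linarith [h])]
    have hcnn : 0 ≤ (T - u) ^ (-(2*α)) / L ^ 2 :=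
      div_nonneg (Real.rpow_nonneg hTu.le _) (sq_nonneg L)
    have hval : ((T - u) ^ (2*α - 2 + 1) - (T - t) ^ (2*α - 2 + 1)) / (2*α - 2 + 1) ≤
        (T - u) ^ (2*α - 2 + 1) / (2*α - 1) := by
      rw [show (2*α - 2 + 1 : ℝ) = 2*α - 1 by ring]
      exact (div_le_div_iff_of_pos_right hα').mpr
        (sub_le_self _ (Real.rpow_nonneg hTt.le _))
    calc _ ≤ ((T - u) ^ (-(2*α)) / L ^ 2) * ((T - u) ^ (2*α - 2 + 1) / (2*α - 1)) :=
          mul_le_mul_of_nonneg_left hval hcnn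
      _ = (T - u)⁻¹ / ((2*α-1) * L^2) := by
          rw [div_mul_div_comm, ← Real.rpow_add hTu,
            show -(2*α) + (2*α - 2 + 1) = (-1 : ℝ) by ring, Real.rpow_neg_one]
          ring
  have h2 : 2 * (T - u)⁻¹ / ((2*α-1) * L^2) =
      (T - u)⁻¹ / ((2*α-1) * L^2) + (T - u)⁻¹ / ((2*α-1) * L^2) := by ring
  linarith [hp1, hp2]

theorem stmt_10 (T α : ℝ) (hT : 0 < T) (hα : 1 / 2 < α) :
    ∃ C > 0, ∀ t : ℝ, max 0 (T - 1 / Real.exp 1) < t → t < T →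
      Real.sqrt (normSq T (gker T α t)) ≤ C / Real.sqrt (lam T α t) := by
  have hα' : (0:ℝ) < 2 * α - 1 := by linarith
  set M : ℝ := max (Real.log T) 0 with hMdef
  have hM : 0 ≤ M := le_max_right _ _
  set K : ℝ := 2 * (1 + M) / (2 * α - 1) ^ 2 with hKdef
  have hK : 0 < K := by
    apply div_pos (by linarith) (by positivity)
  refine ⟨Real.sqrt K, Real.sqrt_pos.mpr hK, ?_⟩
  intro t ht1 ht2
  have ht0 : 0 < t := lt_of_le_of_lt (le_max_left 0 _) ht1
  have hTt : 0 < T - t := by linarith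
  have hte : T - t < 1 / Real.exp 1 := by
    have h := le_max_right 0 (T - 1 / Real.exp 1)
    linarith
  have hlog : Real.log (T - t) < -1 := by
    have h1 : T - t < Real.exp (-1) := by rw [Real.exp_neg]; rw [one_div] at hte; exact hte
    calc Real.log (T - t) < Real.log (Real.exp (-1)) := Real.log_lt_log hTt h1
      _ = -1 := Real.log_exp _
  have hLval : |Real.log (T - t)| = -Real.log (T - t) := abs_of_neg (by linarith)
  set L : ℝ := |Real.log (T - t)| with hLdef
  have hL1 : 1 ≤ L := by rw [hLval]; linarith
  have hL : 0 < L := by linarith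
  -- bound on normSq
  set Ψ : ℝ → ℝ := (Set.Icc (0:ℝ) t).indicator
      (fun u => 2 * (T - u)⁻¹ / ((2 * α - 1) * L ^ 2)) with hΨdef
  have houter : ∀ u, (∫ v in Set.Icc (0:ℝ) T, gker T α t u v * gker T α t u v) ≤ Ψ u := by
    intro u
    by_cases hu : u ∈ Set.Icc (0:ℝ) t
    · rw [hΨdef, Set.indicator_of_mem hu]
      exact inner_bd T α t hα ht0.le ht2 hL u hu
    · rw [hΨdef, Set.indicator_of_notMem hu]
      have hz : ∀ v, gker T α t u v = 0 := fun v => by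
        rw [gker, if_neg (fun h => hu h.1)]
      simp [hz]
  have hΨcont : ContinuousOn (fun u => 2 * (T - u)⁻¹ / ((2 * α - 1) * L ^ 2))
      (Set.Icc (0:ℝ) t) := by
    apply ContinuousOn.div_const
    apply ContinuousOn.mul continuousOn_const
    apply ContinuousOn.inv₀ (by fun_prop)
    intro x hx
    have := hx.2
    intro h; linarith [h]
  have hΨint : Integrable Ψ (volume.restrict (Set.Icc (0:ℝ) T)) := by
    apply MeasureTheory.IntegrableOn.integrable_indicator _ measurableSet_Icc
    rw [IntegrableOn, Measure.restrict_restrict measurableSet_Icc,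
      Set.inter_eq_self_of_subset_left (Set.Icc_subset_Icc_right ht2.le)]
    exact hΨcont.integrableOn_compact isCompact_Icc
  have hns : normSq T (gker T α t) ≤ 2 * (1 + M) / ((2 * α - 1) * L) := by
    rw [normSq, ip]
    have hle := integral_mono_of_nonneg
      (Filter.Eventually.of_forall (fun u =>
        integral_nonneg (fun v => mul_self_nonneg (gker T α t u v))))
      hΨint (Filter.Eventually.of_forall houter)
    refine hle.trans ?_
    rw [hΨdef, MeasureTheory.integral_indicator measurableSet_Icc,
      Measure.restrict_restrict measurableSet_Icc,
      Set.inter_eq_self_of_subset_left (Set.Icc_subset_Icc_right ht2.le),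
      MeasureTheory.integral_Icc_eq_integral_Ioc, ← intervalIntegral.integral_of_le ht0.le]
    have hcongr : ∫ u in (0:ℝ)..t, 2 * (T - u)⁻¹ / ((2 * α - 1) * L ^ 2) =
        ∫ u in (0:ℝ)..t, (2 / ((2 * α - 1) * L ^ 2)) * (T - u)⁻¹ :=
      intervalIntegral.integral_congr (fun v _ => by ring)
    rw [hcongr, intervalIntegral.integral_const_mul, intTinv T 0 t ht0.le ht2]
    have hlb : Real.log (T - 0) - Real.log (T - t) ≤ (1 + M) * L := by
      have h1 : Real.log T ≤ M := le_max_left _ _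
      have h2 : M ≤ M * L := le_mul_of_one_le_right hM hL1
      have h3 : -Real.log (T - t) = L := hLval.symm
      rw [sub_zero]
      nlinarith
    calc 2 / ((2 * α - 1) * L ^ 2) * (Real.log (T - 0) - Real.log (T - t))
        ≤ 2 / ((2 * α - 1) * L ^ 2) * ((1 + M) * L) := by
          apply mul_le_mul_of_nonneg_left hlb
          positivity
      _ = 2 * (1 + M) / ((2 * α - 1) * L) := by
          field_simp
  -- conclude
  have hlamval : lam T α t = L / (2 * α - 1) := rfl
  have hKeq : 2 * (1 + M) / ((2 * α - 1) * L) = K / lam T α t := by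
    rw [hlamval, hKdef]
    field_simp
  refine le_trans (Real.sqrt_le_sqrt (hns.trans_eq hKeq)) ?_
  rw [Real.sqrt_div hK.le]
end
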